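/- arXiv:1701.03054 — 5 statements merged into one kernel-verified Lean document; each statement's English description precedes it below -/
import Mathlib

section
/- Let β be a nonzero cardinal with β ≤ α and let G be one of the Grassmannians G_β(V) or G^β(V). If two bases B and B' of V define the same apartment of G, then every vector of B' is a nonzero scalar multiple of a vector of B (and conversely every vector of B is a nonzero scalar multiple of a vector of B'). -/
open Cardinal Set Submodule


/- Setting: `V` is a left vector space over a division ring `K` whose dimension
`α = Module.rank K V` is an infinite cardinal. -/

universe u v w

section Defs

variable (K : Type u) (V : Type v) [DivisionRing K] [AddCommGroup V] [Module K V]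

/-- `B ⊆ V` is a basis of `V`, given as a set of vectors. -/
def IsBasisSet (B : Set V) : Prop :=
  LinearIndependent K ((↑) : B → V) ∧ Submodule.span K B = ⊤

/-- The Grassmannian `G_β(V)`: all subspaces of dimension `β` and codimension `α`. -/
def Gsub (β : Cardinal.{v}) : Set (Submodule K V) :=
  {X | Module.rank K ↥X = β ∧ Module.rank K (V ⧸ X) = Module.rank K V}

/-- The Grassmannian `G^β(V)`: all subspaces of dimension `α` and codimension `β`. -/
def Gsup (β : Cardinal.{v}) : Set (Submodule K V) :=
  {X | Module.rank K ↥X = Module.rank K V ∧ Module.rank K (V ⧸ X) = β}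

/-- The apartment of a Grassmannian `G` defined by a basis `B`:
all elements of `G` spanned by subsets of `B`. -/
def apartmentOf (G : Set (Submodule K V)) (B : Set V) : Set (Submodule K V) :=
  {X | X ∈ G ∧ ∃ S ⊆ B, X = Submodule.span K S}

end Defs

variable {K : Type u} {V : Type v} [DivisionRing K] [AddCommGroup V] [Module K V]


set_option linter.unusedSectionVars false
section Card

/-- Removing a small set from a big set keeps the cardinality. -/
lemma mk_diff_eq_of_lt {s t : Set V} (hst : s ⊆ t) (hs : #s < ℵ₀) (ht : ℵ₀ ≤ #t) :
    #(t \ s : Set V) = #t := by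
  have h := Cardinal.mk_diff_add_mk hst
  by_cases ha : ℵ₀ ≤ #(t \ s : Set V)
  · rw [Cardinal.add_eq_left ha (le_trans hs.le ha)] at h
    exact h
  · push_neg at ha
    exact absurd (h ▸ Cardinal.add_lt_aleph0 ha hs) (not_lt.2 ht)

/-- Split an infinite set into two halves of full cardinality. -/
lemma exists_half (A : Set V) (hA : ℵ₀ ≤ #A) :
    ∃ C ⊆ A, #C = #A ∧ #(A \ C : Set V) = #A := by
  have hle : #(↥A ⊕ ↥A) ≤ #A := by
    simp only [Cardinal.mk_sum, Cardinal.lift_id]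
    exact (Cardinal.add_eq_self hA).le
  obtain ⟨g⟩ := hle
  refine ⟨Subtype.val '' (Set.range (g ∘ Sum.inl)), ?_, ?_, ?_⟩
  · exact Set.image_subset_iff.2 fun x _ => x.2
  · rw [Cardinal.mk_image_eq Subtype.val_injective,
      Cardinal.mk_range_eq _ (g.injective.comp Sum.inl_injective)]
  · apply le_antisymm (Cardinal.mk_le_mk_of_subset Set.diff_subset)
    have hsub : Subtype.val '' (Set.range (g ∘ Sum.inr)) ⊆
        A \ Subtype.val '' (Set.range (g ∘ Sum.inl)) := by
      rintro x ⟨a, ⟨i, rfl⟩, rfl⟩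
      refine ⟨(g (Sum.inr i)).2, ?_⟩
      rintro ⟨b, ⟨j, rfl⟩, hb⟩
      exact absurd (g.injective (Subtype.val_injective hb)) (by simp)
    calc #A = #(Subtype.val '' (Set.range (g ∘ Sum.inr))) := by
          rw [Cardinal.mk_image_eq Subtype.val_injective,
            Cardinal.mk_range_eq _ (g.injective.comp Sum.inr_injective)]
      _ ≤ _ := Cardinal.mk_le_mk_of_subset hsub

/-- Find a subset of `insert v C` of prescribed nonzero cardinality containing `v`. -/
lemma exists_subset_insert (v : V) {C : Set V} (hv : v ∉ C) {β : Cardinal.{v}}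
    (hβ0 : β ≠ 0) (hβ : β ≤ #C) :
    ∃ S, S ⊆ insert v C ∧ v ∈ S ∧ #S = β := by
  obtain ⟨γ, hγle, hγ⟩ : ∃ γ ≤ β, γ + 1 = β := by
    rcases le_or_gt ℵ₀ β with h | h
    · exact ⟨β, le_rfl, Cardinal.add_one_eq h⟩
    · obtain ⟨n, rfl⟩ := Cardinal.lt_aleph0.1 h
      obtain ⟨m, rfl⟩ := Nat.exists_eq_succ_of_ne_zero (by simpa using hβ0)
      exact ⟨m, by exact_mod_cast Nat.le_succ m, by exact_mod_cast rfl⟩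
  obtain ⟨E, hEC, hE⟩ := Cardinal.le_mk_iff_exists_subset.1 (hγle.trans hβ)
  refine ⟨insert v E, Set.insert_subset_insert hEC, Set.mem_insert _ _, ?_⟩
  rw [Cardinal.mk_insert (fun h => hv (hEC h)), hE, hγ]

end Card

noncomputable def basisOf {B : Set V} (hB : IsBasisSet K V B) : Module.Basis B K V :=
  Module.Basis.mk hB.1 (by rw [Subtype.range_coe]; exact hB.2.ge)

lemma basisOf_apply {B : Set V} (hB : IsBasisSet K V B) (i : B) : basisOf hB i = i :=
  Module.Basis.mk_apply _ _ _

lemma image_preimage_of_subset {B S : Set V} (hB : IsBasisSet K V B) (hS : S ⊆ B) :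
    (basisOf hB) '' (Subtype.val ⁻¹' S) = S := by
  ext x
  simp only [Set.mem_image, Set.mem_preimage, basisOf_apply]
  constructor
  · rintro ⟨i, hi, rfl⟩; exact hi
  · intro hx; exact ⟨⟨x, hS hx⟩, hx, rfl⟩

lemma mem_span_iff {B S : Set V} (hB : IsBasisSet K V B) (hS : S ⊆ B) (x : V) :
    x ∈ Submodule.span K S ↔ ∀ i ∈ ((basisOf hB).repr x).support, ↑i ∈ S := by
  conv_lhs => rw [← image_preimage_of_subset hB hS]
  rw [Module.Basis.mem_span_image]
  simp [Set.subset_def]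

lemma span_inf {B S T : Set V} (hB : IsBasisSet K V B) (hS : S ⊆ B) (hT : T ⊆ B) :
    Submodule.span K S ⊓ Submodule.span K T = Submodule.span K (S ∩ T) := by
  ext x
  rw [Submodule.mem_inf, mem_span_iff hB hS, mem_span_iff hB hT,
    mem_span_iff hB (fun y hy => hS hy.1)]
  simp only [Set.mem_inter_iff]
  exact ⟨fun ⟨h1,h2⟩ i hi => ⟨h1 i hi, h2 i hi⟩,
    fun h => ⟨fun i hi => (h i hi).1, fun i hi => (h i hi).2⟩⟩

lemma rank_span_subset {B S : Set V} (hB : IsBasisSet K V B) (hS : S ⊆ B) :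
    Module.rank K ↥(Submodule.span K S) = #S :=
  rank_span_set (LinearIndepOn.mono (hB.1 : LinearIndepOn K id B) hS)

lemma isCompl_span {B S : Set V} (hB : IsBasisSet K V B) (hS : S ⊆ B) :
    IsCompl (Submodule.span K S) (Submodule.span K (B \ S)) := by
  constructor
  · rw [disjoint_iff, span_inf hB hS Set.diff_subset]
    simp [Set.inter_diff_distrib_left]
  · rw [codisjoint_iff, ← Submodule.span_union, Set.union_diff_cancel hS]
    exact hB.2

lemma rank_quotient_span {B S : Set V} (hB : IsBasisSet K V B) (hS : S ⊆ B) :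
    Module.rank K (V ⧸ Submodule.span K S) = #(B \ S : Set V) := by
  rw [(Submodule.quotientEquivOfIsCompl _ _ (isCompl_span hB hS)).rank_eq,
    rank_span_subset hB Set.diff_subset]

lemma mk_basis_set {B : Set V} (hB : IsBasisSet K V B) : #B = Module.rank K V :=
  (basisOf hB).mk_eq_rank''

lemma repr_basis_mem {B : Set V} (hB : IsBasisSet K V B) {v : V} (hv : v ∈ B) :
    (basisOf hB).repr v = Finsupp.single ⟨v, hv⟩ 1 := by
  have h : ((basisOf hB).repr) ((basisOf hB) ⟨v, hv⟩) = Finsupp.single ⟨v, hv⟩ 1 :=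
    (basisOf hB).repr_self _
  rwa [basisOf_apply] at h

lemma main_dir (hα : Cardinal.aleph0 ≤ Module.rank K V)
    (β : Cardinal.{v}) (hβ0 : β ≠ 0) (hβ : β ≤ Module.rank K V)
    (G : Set (Submodule K V)) (hG : G = Gsub K V β ∨ G = Gsup K V β)
    (B B' : Set V) (hB : IsBasisSet K V B) (hB' : IsBasisSet K V B')
    (heq : apartmentOf K V G B = apartmentOf K V G B') :
    ∀ v ∈ B', ∃ w ∈ B, ∃ c : K, c ≠ 0 ∧ v = c • w := by
  intro v hv
  have hmkB : #B = Module.rank K V := mk_basis_set hB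
  have hmkB' : #B' = Module.rank K V := mk_basis_set hB'
  set f := (basisOf hB).repr v with hfdef
  -- Key claim: the support of `v` in the basis `B` is a singleton.
  have key : ∀ w₁ ∈ f.support, ∀ w₂ ∈ f.support, w₁ = w₂ := by
    intro w₁ hw₁ w₂ hw₂
    by_contra hne
    rcases hG with hGs | hGs
    · -- `G = Gsub K V β`: intersect two apartment elements meeting only in `v`.
      have hdv : #(B' \ {v} : Set V) = Module.rank K V := by
        rw [← hmkB']
        exact mk_diff_eq_of_lt (Set.singleton_subset_iff.2 hv)
          ((Set.finite_singleton v).lt_aleph0) (hmkB' ▸ hα)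
      obtain ⟨C, hCsub, hC, hC2⟩ := exists_half (B' \ {v}) (hdv ▸ hα)
      rw [hdv] at hC hC2
      have hvC : v ∉ C := fun h => (hCsub h).2 rfl
      have hvC2 : v ∉ (B' \ {v}) \ C := fun h => h.1.2 rfl
      obtain ⟨S₁, hS₁sub, hvS₁, hS₁card⟩ :=
        exists_subset_insert v hvC hβ0 (hC ▸ hβ)
      obtain ⟨S₂, hS₂sub, hvS₂, hS₂card⟩ :=
        exists_subset_insert v hvC2 hβ0 (hC2 ▸ hβ)
      have hS₁B' : S₁ ⊆ B' := hS₁sub.trans (Set.insert_subset hv (fun x hx => (hCsub hx).1))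
      have hS₂B' : S₂ ⊆ B' := hS₂sub.trans (Set.insert_subset hv (fun x hx => hx.1.1))
      have hinter : S₁ ∩ S₂ = {v} := by
        apply Set.Subset.antisymm
        · rintro x ⟨h1, h2⟩
          rcases hS₁sub h1 with rfl | h1'
          · rfl
          rcases hS₂sub h2 with rfl | h2'
          · rfl
          exact absurd h1' h2'.2
        · rintro x rfl; exact ⟨hvS₁, hvS₂⟩
      -- complements have full rank
      have hcompl₁ : #(B' \ S₁ : Set V) = Module.rank K V := by
        apply le_antisymm (hmkB' ▸ Cardinal.mk_le_mk_of_subset Set.diff_subset)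
        rw [← hC2]
        apply Cardinal.mk_le_mk_of_subset
        intro x hx
        refine ⟨hx.1.1, fun hxS => ?_⟩
        rcases hS₁sub hxS with rfl | h
        · exact hx.1.2 rfl
        · exact hx.2 h
      have hcompl₂ : #(B' \ S₂ : Set V) = Module.rank K V := by
        apply le_antisymm (hmkB' ▸ Cardinal.mk_le_mk_of_subset Set.diff_subset)
        rw [← hC]
        apply Cardinal.mk_le_mk_of_subset
        intro x hx
        refine ⟨(hCsub hx).1, fun hxS => ?_⟩
        rcases hS₂sub hxS with rfl | h
        · exact (hCsub hx).2 rfl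
        · exact h.2 hx
      have hX₁ : Submodule.span K S₁ ∈ apartmentOf K V G B' :=
        ⟨hGs ▸ ⟨(rank_span_subset hB' hS₁B').trans hS₁card,
          (rank_quotient_span hB' hS₁B').trans hcompl₁⟩, S₁, hS₁B', rfl⟩
      have hX₂ : Submodule.span K S₂ ∈ apartmentOf K V G B' :=
        ⟨hGs ▸ ⟨(rank_span_subset hB' hS₂B').trans hS₂card,
          (rank_quotient_span hB' hS₂B').trans hcompl₂⟩, S₂, hS₂B', rfl⟩
      rw [← heq] at hX₁ hX₂
      obtain ⟨-, T₁, hT₁B, hXT₁⟩ := hX₁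
      obtain ⟨-, T₂, hT₂B, hXT₂⟩ := hX₂
      have hvX₁ : v ∈ Submodule.span K T₁ := hXT₁ ▸ Submodule.subset_span hvS₁
      have hvX₂ : v ∈ Submodule.span K T₂ := hXT₂ ▸ Submodule.subset_span hvS₂
      rw [mem_span_iff hB hT₁B] at hvX₁
      rw [mem_span_iff hB hT₂B] at hvX₂
      have hspan : Submodule.span K (T₁ ∩ T₂) = Submodule.span K ({v} : Set V) := by
        rw [← span_inf hB hT₁B hT₂B, ← hXT₁, ← hXT₂,
          span_inf hB' hS₁B' hS₂B', hinter]
      have hw₁v : (w₁ : V) ∈ Submodule.span K ({v} : Set V) := by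
        rw [← hspan]; exact Submodule.subset_span ⟨hvX₁ w₁ hw₁, hvX₂ w₁ hw₁⟩
      have hw₂v : (w₂ : V) ∈ Submodule.span K ({v} : Set V) := by
        rw [← hspan]; exact Submodule.subset_span ⟨hvX₁ w₂ hw₂, hvX₂ w₂ hw₂⟩
      rw [Submodule.mem_span_singleton] at hw₁v hw₂v
      obtain ⟨c₁, hc₁⟩ := hw₁v
      obtain ⟨c₂, hc₂⟩ := hw₂v
      have hc₁0 : c₁ ≠ 0 := by
        rintro rfl
        exact LinearIndependent.ne_zero w₁ hB.1 (by rw [← hc₁, zero_smul])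
      have hw₂w₁ : (w₂ : V) = (c₂ * c₁⁻¹) • (w₁ : V) := by
        rw [← hc₁, smul_smul, mul_assoc, inv_mul_cancel₀ hc₁0, mul_one, hc₂]
      have hrepr := congrArg (basisOf hB).repr hw₂w₁
      rw [map_smul, repr_basis_mem hB w₂.2, repr_basis_mem hB w₁.2,
        Finsupp.smul_single] at hrepr
      have := congrArg (fun g => g w₂) hrepr
      simp only [Finsupp.single_eq_same] at this
      rw [Finsupp.single_eq_of_ne (by
        intro h
        exact hne (Subtype.ext (congrArg Subtype.val h).symm))] at this
      exact one_ne_zero this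
    · -- `G = Gsup K V β`: join two apartment elements avoiding `v`.
      have hw12 : (w₁ : V) ≠ (w₂ : V) := fun h => hne (Subtype.ext h)
      have hpair : #({(w₁ : V), (w₂ : V)} : Set V) < Cardinal.aleph0 :=
        ((Set.finite_singleton _).insert _).lt_aleph0
      have hpairB : ({(w₁ : V), (w₂ : V)} : Set V) ⊆ B := by
        rintro x (rfl | rfl)
        exacts [w₁.2, w₂.2]
      have hdv : #(B \ {(w₁ : V), (w₂ : V)} : Set V) = Module.rank K V := by
        rw [← hmkB]
        exact mk_diff_eq_of_lt hpairB hpair (hmkB ▸ hα)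
      obtain ⟨C, hCsub, hC, hC2⟩ := exists_half _ (hdv ▸ hα)
      rw [hdv] at hC hC2
      have hw₁C : (w₁ : V) ∉ C := fun h => (hCsub h).2 (Set.mem_insert _ _)
      have hw₂C2 : (w₂ : V) ∉ (B \ {(w₁ : V), (w₂ : V)}) \ C :=
        fun h => h.1.2 (Set.mem_insert_of_mem _ rfl)
      obtain ⟨T₁, hT₁sub, hwT₁, hT₁card⟩ :=
        exists_subset_insert (w₁ : V) hw₁C hβ0 (hC ▸ hβ)
      obtain ⟨T₂, hT₂sub, hwT₂, hT₂card⟩ :=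
        exists_subset_insert (w₂ : V) hw₂C2 hβ0 (hC2 ▸ hβ)
      have hT₁B : T₁ ⊆ B := hT₁sub.trans (Set.insert_subset w₁.2 (fun x hx => (hCsub hx).1))
      have hT₂B : T₂ ⊆ B := hT₂sub.trans (Set.insert_subset w₂.2 (fun x hx => hx.1.1))
      have hT₁T₂ : T₁ ∩ T₂ = ∅ := by
        ext x
        simp only [Set.mem_inter_iff, Set.mem_empty_iff_false, iff_false, not_and]
        intro h1 h2
        rcases hT₁sub h1 with rfl | h1'
        · rcases hT₂sub h2 with h | h2'
          · exact hw12 h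
          · exact h2'.1.2 (Set.mem_insert _ _)
        · rcases hT₂sub h2 with rfl | h2'
          · exact (hCsub h1').2 (Set.mem_insert_of_mem _ rfl)
          · exact h2'.2 h1'
      -- ranks of the spans of complements
      have hrank₁ : #(B \ T₁ : Set V) = Module.rank K V := by
        apply le_antisymm (hmkB ▸ Cardinal.mk_le_mk_of_subset Set.diff_subset)
        rw [← hC2]
        apply Cardinal.mk_le_mk_of_subset
        intro x hx
        refine ⟨hx.1.1, fun hxT => ?_⟩
        rcases hT₁sub hxT with rfl | h
        · exact hx.1.2 (Set.mem_insert _ _)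
        · exact hx.2 h
      have hrank₂ : #(B \ T₂ : Set V) = Module.rank K V := by
        apply le_antisymm (hmkB ▸ Cardinal.mk_le_mk_of_subset Set.diff_subset)
        rw [← hC]
        apply Cardinal.mk_le_mk_of_subset
        intro x hx
        refine ⟨(hCsub hx).1, fun hxT => ?_⟩
        rcases hT₂sub hxT with rfl | h
        · exact (hCsub hx).2 (Set.mem_insert_of_mem _ rfl)
        · exact h.2 hx
      have hX₁ : Submodule.span K (B \ T₁) ∈ apartmentOf K V G B :=
        ⟨hGs ▸ ⟨(rank_span_subset hB Set.diff_subset).trans hrank₁, by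
          rw [rank_quotient_span hB Set.diff_subset, Set.diff_diff_cancel_left hT₁B, hT₁card]⟩,
          B \ T₁, Set.diff_subset, rfl⟩
      have hX₂ : Submodule.span K (B \ T₂) ∈ apartmentOf K V G B :=
        ⟨hGs ▸ ⟨(rank_span_subset hB Set.diff_subset).trans hrank₂, by
          rw [rank_quotient_span hB Set.diff_subset, Set.diff_diff_cancel_left hT₂B, hT₂card]⟩,
          B \ T₂, Set.diff_subset, rfl⟩
      rw [heq] at hX₁ hX₂
      obtain ⟨-, S₁, hS₁B', hXS₁⟩ := hX₁
      obtain ⟨-, S₂, hS₂B', hXS₂⟩ := hX₂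
      have hvX₁ : v ∉ Submodule.span K (B \ T₁) := by
        rw [mem_span_iff hB Set.diff_subset]
        intro h
        exact (h w₁ hw₁).2 hwT₁
      have hvX₂ : v ∉ Submodule.span K (B \ T₂) := by
        rw [mem_span_iff hB Set.diff_subset]
        intro h
        exact (h w₂ hw₂).2 hwT₂
      have hvS₁ : S₁ ⊆ B' \ {v} := fun x hx => ⟨hS₁B' hx, by
        rintro rfl
        exact hvX₁ (hXS₁ ▸ Submodule.subset_span hx)⟩
      have hvS₂ : S₂ ⊆ B' \ {v} := fun x hx => ⟨hS₂B' hx, by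
        rintro rfl
        exact hvX₂ (hXS₂ ▸ Submodule.subset_span hx)⟩
      have htop : Submodule.span K (B \ T₁) ⊔ Submodule.span K (B \ T₂) = ⊤ := by
        rw [← Submodule.span_union, ← Set.diff_inter, hT₁T₂, Set.diff_empty]
        exact hB.2
      have hle : (⊤ : Submodule K V) ≤ Submodule.span K (B' \ {v}) := by
        rw [← htop, hXS₁, hXS₂]
        exact sup_le (Submodule.span_mono hvS₁) (Submodule.span_mono hvS₂)
      have hvmem : v ∈ Submodule.span K (B' \ {v}) := hle trivial
      rw [mem_span_iff hB' Set.diff_subset] at hvmem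
      have := hvmem ⟨v, hv⟩ (by
        rw [repr_basis_mem hB' hv, Finsupp.support_single_ne_zero _ one_ne_zero]
        exact Finset.mem_singleton_self _)
      exact this.2 rfl
  -- Conclude: `f` is supported on a single element of `B`.
  have hv0 : v ≠ 0 := LinearIndependent.ne_zero ⟨v, hv⟩ hB'.1
  have hf0 : f ≠ 0 := fun h => hv0 ((basisOf hB).repr.map_eq_zero_iff.1 h)
  obtain ⟨w₀, hw₀⟩ := Finsupp.support_nonempty_iff.2 hf0
  have hsupp : f.support = {w₀} :=
    Finset.eq_singleton_iff_unique_mem.2 ⟨hw₀, fun x hx => key x hx w₀ hw₀⟩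
  obtain ⟨hfw₀, hfs⟩ := Finsupp.support_eq_singleton.1 hsupp
  refine ⟨(w₀ : V), w₀.2, f w₀, hfw₀, ?_⟩
  have : (basisOf hB).repr.symm f = v := (basisOf hB).repr.symm_apply_apply v
  rw [hfs, Module.Basis.repr_symm_single, basisOf_apply] at this
  exact this.symm


/-- If two bases `B` and `B'` of `V` define the same apartment of `G`, then the vectors
of each basis are nonzero scalar multiples of the vectors of the other. -/
theorem stmt14 (hα : Cardinal.aleph0 ≤ Module.rank K V)
    (β : Cardinal.{v}) (hβ0 : β ≠ 0) (hβ : β ≤ Module.rank K V)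
    (G : Set (Submodule K V)) (hG : G = Gsub K V β ∨ G = Gsup K V β)
    (B B' : Set V) (hB : IsBasisSet K V B) (hB' : IsBasisSet K V B')
    (heq : apartmentOf K V G B = apartmentOf K V G B') :
    (∀ v ∈ B', ∃ w ∈ B, ∃ c : K, c ≠ 0 ∧ v = c • w) ∧
    (∀ w ∈ B, ∃ v ∈ B', ∃ c : K, c ≠ 0 ∧ w = c • v) := by
  exact ⟨main_dir hα β hβ0 hβ G hG B B' hB hB' heq,
    main_dir hα β hβ0 hβ G hG B' B hB' hB heq.symm⟩
end

section
/- Let β ≤ α be an infinite cardinal and let G be one of the Grassmannians G_β(V) or G^β(V). If X, Y ∈ G satisfy X ∩ Y ≠ 0 and X ∩ Y ∉ G, then there exists Z ∈ G such that X ∩ Y ⊆ Z, Z ∩ X ∈ G, and Z ∩ Y ∈ G. -/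
/- Setting: `V` is a left vector space over a division ring `K` whose dimension
`α = Module.rank K V` is an infinite cardinal. -/

universe u v w

variable {K : Type u} {V : Type v} [DivisionRing K] [AddCommGroup V] [Module K V]

open Cardinal Submodule Function

private lemma cardAux {a b β : Cardinal.{v}} (hβ : ℵ₀ ≤ β) (h : a + b = β) (ha : a < β) :
    b = β := by
  refine le_antisymm (h ▸ self_le_add_left b a) ?_
  by_contra hb
  push_neg at hb
  exact absurd h (ne_of_lt (Cardinal.add_lt_of_lt hβ ha hb))

private lemma corank_anti {p q : Submodule K V} (h : p ≤ q) :
    Module.rank K (V ⧸ q) ≤ Module.rank K (V ⧸ p) := by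
  have hle : p ≤ q.comap LinearMap.id := h
  refine LinearMap.rank_le_of_surjective (Submodule.mapQ p q LinearMap.id hle) ?_
  intro x
  obtain ⟨v, rfl⟩ := q.mkQ_surjective x
  exact ⟨p.mkQ v, by simp [Submodule.mapQ_apply]⟩

private lemma rank_le_rank_self (p : Submodule K V) :
    Module.rank K ↥p ≤ Module.rank K V := by
  simpa [rank_top] using Submodule.rank_mono (le_top : p ≤ ⊤)

private lemma main_construction (hα : Cardinal.aleph0 ≤ Module.rank K V)
    {β : Cardinal.{v}} (hβinf : Cardinal.aleph0 ≤ β)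
    (X Y : Submodule K V)
    (hX1 : Module.rank K ↥X = β) (hX2 : Module.rank K (V ⧸ X) = Module.rank K V)
    (hY1 : Module.rank K ↥Y = β) (hY2 : Module.rank K (V ⧸ Y) = Module.rank K V)
    (hD : Module.rank K ↥(X ⊓ Y) < β) :
    ∃ Z : Submodule K V, X ⊓ Y ≤ Z ∧ Z ⊓ X = X ∧
      (Module.rank K ↥Z = β ∧ Module.rank K (V ⧸ Z) = Module.rank K V) ∧
      (Module.rank K ↥(Z ⊓ Y) = β ∧ Module.rank K (V ⧸ (Z ⊓ Y)) = Module.rank K V) := by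
  classical
  set D := X ⊓ Y with hDdef
  have hβle : β ≤ Module.rank K V := hX1 ▸ rank_le_rank_self X
  -- a complement Y' of D inside Y
  obtain ⟨c, hc⟩ := Submodule.exists_isCompl (D.comap Y.subtype)
  set Y' : Submodule K V := c.map Y.subtype with hY'def
  have hDY : D ≤ Y := inf_le_right
  have hDmap : (D.comap Y.subtype).map Y.subtype = D := by
    rw [Submodule.map_comap_subtype]
    exact inf_eq_right.mpr hDY
  have hY'le : Y' ≤ Y := Submodule.map_subtype_le Y c
  have hDY'bot : D ⊓ Y' = ⊥ := by
    rw [← hDmap, hY'def, ← Submodule.map_inf _ Y.injective_subtype,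
      hc.inf_eq_bot, Submodule.map_bot]
  have hDY'sup : D ⊔ Y' = Y := by
    rw [← hDmap, hY'def, ← Submodule.map_sup, hc.sup_eq_top, Submodule.map_top,
      Submodule.range_subtype]
  have hrY' : Module.rank K ↥Y' = β := by
    have h1 : Module.rank K ↥(D.comap Y.subtype) = Module.rank K ↥D :=
      (Submodule.comapSubtypeEquivOfLe hDY).rank_eq
    have h2 : Module.rank K ↥c = Module.rank K ↥Y' :=
      (Submodule.equivMapOfInjective Y.subtype Y.injective_subtype c).rank_eq
    have h3 := Submodule.rank_sup_add_rank_inf_eq (D.comap Y.subtype) c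
    rw [hc.sup_eq_top, hc.inf_eq_bot, rank_top, rank_bot, add_zero, hY1, h1] at h3
    rw [← h2]
    exact cardAux hβinf h3.symm (h1 ▸ hD)
  -- split Y' into two pieces of rank β
  set ι := Module.Free.ChooseBasisIndex K ↥Y' with hιdef
  set b : Module.Basis ι K ↥Y' := Module.Free.chooseBasis K ↥Y' with hbdef
  have hι : #ι = β := by
    rw [← Module.Free.rank_eq_card_chooseBasisIndex, hrY']
  have hsum : #(ι ⊕ ι) = #ι := by
    simp only [Cardinal.mk_sum, Cardinal.lift_id, hι]
    exact Cardinal.add_eq_self hβinf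
  obtain ⟨e⟩ := Cardinal.eq.mp hsum
  set b' : Module.Basis (ι ⊕ ι) K ↥Y' := b.reindex e.symm with hb'def
  have hb'li : LinearIndependent K b' := b'.linearIndependent
  have hb'inj : Injective b' := b'.injective
  set W₀ : Submodule K ↥Y' := Submodule.span K (Set.range (b' ∘ Sum.inl)) with hW₀def
  set W₂₀ : Submodule K ↥Y' := Submodule.span K (Set.range (b' ∘ Sum.inr)) with hW₂₀def
  have hrW₀ : Module.rank K ↥W₀ = β := by
    rw [hW₀def, rank_span (hb'li.comp Sum.inl Sum.inl_injective),
      Cardinal.mk_range_eq _ (hb'inj.comp Sum.inl_injective), hι]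
  have hrW₂₀ : Module.rank K ↥W₂₀ = β := by
    rw [hW₂₀def, rank_span (hb'li.comp Sum.inr Sum.inr_injective),
      Cardinal.mk_range_eq _ (hb'inj.comp Sum.inr_injective), hι]
  have hdisj0 : W₀ ⊓ W₂₀ = ⊥ := by
    rw [hW₀def, hW₂₀def, Set.range_comp, Set.range_comp]
    exact (hb'li.disjoint_span_image Set.isCompl_range_inl_range_inr.disjoint).eq_bot
  set W : Submodule K V := W₀.map Y'.subtype with hWdef
  set W₂ : Submodule K V := W₂₀.map Y'.subtype with hW₂def
  have hWY' : W ≤ Y' := Submodule.map_subtype_le Y' W₀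
  have hW₂Y' : W₂ ≤ Y' := Submodule.map_subtype_le Y' W₂₀
  have hWY : W ≤ Y := hWY'.trans hY'le
  have hW₂Y : W₂ ≤ Y := hW₂Y'.trans hY'le
  have hrW : Module.rank K ↥W = β := by
    rw [← (Submodule.equivMapOfInjective Y'.subtype Y'.injective_subtype W₀).rank_eq, hrW₀]
  have hrW₂ : Module.rank K ↥W₂ = β := by
    rw [← (Submodule.equivMapOfInjective Y'.subtype Y'.injective_subtype W₂₀).rank_eq, hrW₂₀]
  have hWW₂ : W ⊓ W₂ = ⊥ := by
    rw [hWdef, hW₂def, ← Submodule.map_inf _ Y'.injective_subtype, hdisj0, Submodule.map_bot]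
  -- define Z
  refine ⟨X ⊔ W, le_trans inf_le_left le_sup_left, inf_eq_right.mpr le_sup_left, ?_, ?_⟩
  · constructor
    · -- rank Z = β
      refine le_antisymm ?_ (hX1 ▸ Submodule.rank_mono le_sup_left)
      have h := Submodule.rank_sup_add_rank_inf_eq X W
      calc Module.rank K ↥(X ⊔ W)
          ≤ Module.rank K ↥(X ⊔ W) + Module.rank K ↥(X ⊓ W) := self_le_add_right _ _
        _ = Module.rank K ↥X + Module.rank K ↥W := h
        _ = β + β := by rw [hX1, hrW]
        _ = β := Cardinal.add_eq_self hβinf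
    · -- corank Z = rank V
      refine le_antisymm (rank_quotient_le _) ?_
      rcases lt_or_eq_of_le hβle with hlt | heq
      · -- β < rank V : forced by rank-nullity
        have h := Submodule.rank_quotient_add_rank (X ⊔ W)
        by_contra hcon
        push_neg at hcon
        have hZrank : Module.rank K ↥(X ⊔ W) < Module.rank K V := by
          refine lt_of_le_of_lt ?_ hlt
          have h2 := Submodule.rank_sup_add_rank_inf_eq X W
          calc Module.rank K ↥(X ⊔ W)
              ≤ Module.rank K ↥(X ⊔ W) + Module.rank K ↥(X ⊓ W) := self_le_add_right _ _
            _ = Module.rank K ↥X + Module.rank K ↥W := h2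
            _ = β + β := by rw [hX1, hrW]
            _ = β := Cardinal.add_eq_self hβinf
        exact absurd h (ne_of_lt (Cardinal.add_lt_of_lt hα hcon hZrank))
      · -- β = rank V : use W₂, which misses Z
        have hZY : (X ⊔ W) ⊓ Y = D ⊔ W := by
          rw [sup_comm X W, sup_inf_assoc_of_le X hWY, sup_comm W (X ⊓ Y)]
        have hDWY' : (D ⊔ W) ⊓ Y' = W := by
          rw [sup_comm D W, sup_inf_assoc_of_le D hWY', hDY'bot, sup_bot_eq]
        have hW₂Z : W₂ ⊓ (X ⊔ W) = ⊥ := by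
          calc W₂ ⊓ (X ⊔ W) = (W₂ ⊓ Y) ⊓ (X ⊔ W) := by rw [inf_eq_left.mpr hW₂Y]
            _ = W₂ ⊓ ((X ⊔ W) ⊓ Y) := by rw [inf_assoc, inf_comm Y (X ⊔ W)]
            _ = W₂ ⊓ (D ⊔ W) := by rw [hZY]
            _ = (W₂ ⊓ Y') ⊓ (D ⊔ W) := by rw [inf_eq_left.mpr hW₂Y']
            _ = W₂ ⊓ ((D ⊔ W) ⊓ Y') := by rw [inf_assoc, inf_comm Y' (D ⊔ W)]
            _ = W₂ ⊓ W := by rw [hDWY']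
            _ = ⊥ := by rw [inf_comm]; exact hWW₂
        set f : ↥W₂ →ₗ[K] V ⧸ (X ⊔ W) := (X ⊔ W).mkQ.comp W₂.subtype with hfdef
        have hfinj : Injective f := by
          intro x y hxy
          have hmk : (X ⊔ W).mkQ (x : V) = (X ⊔ W).mkQ (y : V) := hxy
          have hsub : ((x : V) - (y : V)) ∈ X ⊔ W := by
            rwa [← sub_eq_zero, ← map_sub, Submodule.mkQ_apply,
              Submodule.Quotient.mk_eq_zero] at hmk
          have hmem : ((x : V) - (y : V)) ∈ W₂ ⊓ (X ⊔ W) :=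
            ⟨sub_mem x.2 y.2, hsub⟩
          rw [hW₂Z] at hmem
          exact Subtype.ext (sub_eq_zero.mp hmem)
        have := f.rank_le_of_injective hfinj
        rw [hrW₂] at this
        exact heq ▸ this
  · -- Z ⊓ Y
    have hZY : (X ⊔ W) ⊓ Y = D ⊔ W := by
      rw [sup_comm X W, sup_inf_assoc_of_le X hWY, sup_comm W (X ⊓ Y)]
    rw [hZY]
    constructor
    · refine le_antisymm ?_ (hrW ▸ Submodule.rank_mono le_sup_right)
      have h := Submodule.rank_sup_add_rank_inf_eq D W
      calc Module.rank K ↥(D ⊔ W)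
          ≤ Module.rank K ↥(D ⊔ W) + Module.rank K ↥(D ⊓ W) := self_le_add_right _ _
        _ = Module.rank K ↥D + Module.rank K ↥W := h
        _ ≤ β + β := add_le_add hD.le hrW.le
        _ = β := Cardinal.add_eq_self hβinf
    · refine le_antisymm (rank_quotient_le _) ?_
      have hle : D ⊔ W ≤ Y := sup_le hDY hWY
      exact hY2 ▸ corank_anti hle

/-- If `X, Y ∈ G` have nonzero intersection which is not an element of `G`, then some
`Z ∈ G` contains `X ∩ Y` and intersects both `X` and `Y` in elements of `G`. -/
theorem stmt16 (hα : Cardinal.aleph0 ≤ Module.rank K V)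
    (β : Cardinal.{v}) (hβinf : Cardinal.aleph0 ≤ β) (hβ : β ≤ Module.rank K V)
    (G : Set (Submodule K V)) (hG : G = Gsub K V β ∨ G = Gsup K V β) :
    ∀ X ∈ G, ∀ Y ∈ G, X ⊓ Y ≠ ⊥ → X ⊓ Y ∉ G →
      ∃ Z ∈ G, X ⊓ Y ≤ Z ∧ Z ⊓ X ∈ G ∧ Z ⊓ Y ∈ G := by
  intro X hXG Y hYG _hne hDnot
  rcases hG with rfl | rfl
  · -- G = Gsub
    obtain ⟨hX1, hX2⟩ := hXG
    obtain ⟨hY1, hY2⟩ := hYG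
    have hcorD : Module.rank K (V ⧸ (X ⊓ Y)) = Module.rank K V :=
      le_antisymm (rank_quotient_le _) (hX2 ▸ corank_anti inf_le_left)
    have hrD : Module.rank K ↥(X ⊓ Y) < β :=
      lt_of_le_of_ne (hX1 ▸ Submodule.rank_mono inf_le_left)
        (fun h => hDnot ⟨h, hcorD⟩)
    obtain ⟨Z, h1, h2, h3, h4⟩ := main_construction hα hβinf X Y hX1 hX2 hY1 hY2 hrD
    exact ⟨Z, h3, h1, by rw [h2]; exact ⟨hX1, hX2⟩, h4⟩
  · -- G = Gsup
    obtain ⟨hX1, hX2⟩ := hXG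
    obtain ⟨hY1, hY2⟩ := hYG
    have hcor_ge : β ≤ Module.rank K (V ⧸ (X ⊓ Y)) := hX2 ▸ corank_anti inf_le_left
    have hcor_le : Module.rank K (V ⧸ (X ⊓ Y)) ≤ β := by
      set f : (V ⧸ (X ⊓ Y)) →ₗ[K] (V ⧸ X) × (V ⧸ Y) :=
        LinearMap.prod (Submodule.mapQ (X ⊓ Y) X LinearMap.id inf_le_left)
          (Submodule.mapQ (X ⊓ Y) Y LinearMap.id inf_le_right) with hfdef
      have hfinj : Function.Injective f := by
        intro a b hab
        obtain ⟨va, rfl⟩ := (X ⊓ Y).mkQ_surjective a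
        obtain ⟨vb, rfl⟩ := (X ⊓ Y).mkQ_surjective b
        rw [Prod.ext_iff] at hab
        obtain ⟨habX, habY⟩ := hab
        simp only [hfdef, LinearMap.prod_apply, Pi.prod, Submodule.mkQ_apply,
          Submodule.mapQ_apply, LinearMap.id_apply] at habX habY
        have hXmem : va - vb ∈ X := (Submodule.Quotient.eq X).mp habX
        have hYmem : va - vb ∈ Y := (Submodule.Quotient.eq Y).mp habY
        simp only [Submodule.mkQ_apply]
        exact (Submodule.Quotient.eq (X ⊓ Y)).mpr ⟨hXmem, hYmem⟩
      calc Module.rank K (V ⧸ (X ⊓ Y))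
          ≤ Module.rank K ((V ⧸ X) × (V ⧸ Y)) := f.rank_le_of_injective hfinj
        _ = Module.rank K (V ⧸ X) + Module.rank K (V ⧸ Y) := rank_prod'
        _ = β + β := by rw [hX2, hY2]
        _ = β := Cardinal.add_eq_self hβinf
    have hcorD : Module.rank K (V ⧸ (X ⊓ Y)) = β := le_antisymm hcor_le hcor_ge
    have hrDlt : Module.rank K ↥(X ⊓ Y) < Module.rank K V :=
      lt_of_le_of_ne (rank_le_rank_self _) (fun h => hDnot ⟨h, hcorD⟩)
    have hβα : β = Module.rank K V := by
      have h := Submodule.rank_quotient_add_rank (X ⊓ Y)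
      rw [hcorD] at h
      by_contra hne'
      have hβlt : β < Module.rank K V := lt_of_le_of_ne hβ hne'
      exact absurd h (ne_of_lt (Cardinal.add_lt_of_lt hα hβlt hrDlt))
    obtain ⟨Z, h1, h2, h3, h4⟩ := main_construction hα hβinf X Y
      (hX1.trans hβα.symm) (hX2.trans hβα) (hY1.trans hβα.symm) (hY2.trans hβα)
      (by rw [hβα]; exact hrDlt)
    exact ⟨Z, ⟨h3.1.trans hβα, h3.2.trans hβα.symm⟩, h1,
      by rw [h2]; exact ⟨hX1, hX2⟩, ⟨h4.1.trans hβα, h4.2.trans hβα.symm⟩⟩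
end

section
/- Let β be a cardinal with 1 < β ≤ α, let G be one of the Grassmannians G_β(V) or G^β(V), and let A be the apartment of G defined by a basis {e_i}_{i∈I} of V. For distinct i, j ∈ I set A(+i,−j) = A(+i) ∩ A(−j), and call two distinct such subsets A(+i,−j), A(+i',−j') adjacent if i = i' or j = j'. Then every maximal (with respect to inclusion) collection of mutually adjacent subsets of the form A(+i,−j) is either {A(+i,−j)}_{j∈I∖{i}} or {A(+j,−i)}_{j∈I∖{i}} for some i ∈ I. -/
/- Setting: `V` is a left vector space over a division ring `K` whose dimension
`α = Module.rank K V` is an infinite cardinal. -/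

universe u v w

section Defs

variable (K : Type u) (V : Type v) [DivisionRing K] [AddCommGroup V] [Module K V]

/-- `A(+i)`: the elements of the apartment of `G` defined by the basis `b`
which contain the vector `b i`. -/
def aPlus {ι : Type w} (G : Set (Submodule K V)) (b : Module.Basis ι K V) (i : ι) :
    Set (Submodule K V) :=
  {X | X ∈ apartmentOf K V G (Set.range ⇑b) ∧ b i ∈ X}

/-- `A(−i)`: the elements of the apartment of `G` defined by the basis `b`
which do not contain the vector `b i`. -/
def aMinus {ι : Type w} (G : Set (Submodule K V)) (b : Module.Basis ι K V) (i : ι) :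
    Set (Submodule K V) :=
  apartmentOf K V G (Set.range ⇑b) \ aPlus K V G b i

/-- The complementary subset `A(+i,−j) = A(+i) ∩ A(−j)` of the apartment defined by
the basis `b`. -/
def pmSet {ι : Type w} (G : Set (Submodule K V)) (b : Module.Basis ι K V) (i j : ι) :
    Set (Submodule K V) :=
  aPlus K V G b i ∩ aMinus K V G b j

/-- Every member of the collection `S` is of the form `A(+i,−j)` with `i ≠ j`. -/
def PMColl {ι : Type w} (G : Set (Submodule K V)) (b : Module.Basis ι K V)
    (S : Set (Set (Submodule K V))) : Prop :=
  ∀ s ∈ S, ∃ i j : ι, i ≠ j ∧ s = pmSet K V G b i j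

/-- The members of `S` are mutually adjacent: any two distinct members can be written
as `A(+i,−j)` and `A(+i',−j')` with `(i,j) ≠ (i',j')` and `i = i'` or `j = j'`. -/
def PMMutuallyAdjacent {ι : Type w} (G : Set (Submodule K V)) (b : Module.Basis ι K V)
    (S : Set (Set (Submodule K V))) : Prop :=
  ∀ s ∈ S, ∀ t ∈ S, s ≠ t → ∃ i j i' j' : ι, i ≠ j ∧ i' ≠ j' ∧
    s = pmSet K V G b i j ∧ t = pmSet K V G b i' j' ∧
    (i, j) ≠ (i', j') ∧ (i = i' ∨ j = j')

end Defs



open Cardinal Set Submodule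

lemma exists_split {α' : Type v} {R : Set α'} {γ : Cardinal.{v}} (hR : ℵ₀ ≤ #R)
    (hγ : γ ≤ #R) (F1 F2 : Set α') (h1 : F1.Finite) (h2 : F2.Finite)
    (h1R : F1 ⊆ R) (h2R : F2 ⊆ R) (hd : Disjoint F1 F2) (hF1 : #F1 ≤ γ) :
    ∃ S : Set α', S ⊆ R ∧ F1 ⊆ S ∧ Disjoint S F2 ∧ #S = γ ∧ #(R \ S : Set α') = #R := by
  set F : Set α' := F1 ∪ F2 with hF
  have hFR : F ⊆ R := union_subset h1R h2R
  have hFfin : F.Finite := h1.union h2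
  have hWcard : #(R \ F : Set α') = #R := by
    have hsum : #(R \ F : Set α') + #F = #R := Cardinal.mk_diff_add_mk hFR
    have hFlt : #F < #R := lt_of_lt_of_le hFfin.lt_aleph0 hR
    by_contra hne
    have hlt : #(R \ F : Set α') < #R :=
      lt_of_le_of_ne (Cardinal.mk_le_mk_of_subset diff_subset) hne
    exact absurd hsum (ne_of_lt (Cardinal.add_lt_of_lt hR hlt hFlt))
  rcases eq_or_lt_of_le hγ with hγeq | hγlt
  · -- γ = #R : split R \ F into two pieces of full size
    have h2 : #((R \ F : Set α') ⊕ (R \ F : Set α')) = #(R \ F : Set α') := by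
      simp [Cardinal.mk_sum, Cardinal.add_eq_self (hWcard ▸ hR)]
    obtain ⟨e⟩ := Cardinal.eq.mp h2
    set W1 : Set α' := Subtype.val '' (Set.range (e ∘ Sum.inl)) with hW1
    set W2 : Set α' := Subtype.val '' (Set.range (e ∘ Sum.inr)) with hW2
    have hW1sub : W1 ⊆ R \ F := by rintro x ⟨y, _, rfl⟩; exact y.2
    have hW2sub : W2 ⊆ R \ F := by rintro x ⟨y, _, rfl⟩; exact y.2
    have hW1card : #W1 = #R := by
      rw [hW1, Cardinal.mk_image_eq Subtype.val_injective,
        Cardinal.mk_range_eq _ (e.injective.comp Sum.inl_injective)]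
      exact hWcard ▸ rfl
    have hW12 : Disjoint W1 W2 := by
      rw [Set.disjoint_left]
      rintro x ⟨y, ⟨a, rfl⟩, rfl⟩ ⟨z, ⟨b, hb⟩, hz⟩
      have : z = e (Sum.inl a) := Subtype.val_injective hz
      rw [← hb] at this
      exact Sum.inl_ne_inr (e.injective this.symm)
    refine ⟨F1 ∪ W1, union_subset h1R (hW1sub.trans diff_subset), subset_union_left, ?_, ?_, ?_⟩
    · exact disjoint_union_left.2 ⟨hd, (disjoint_of_subset_left hW1sub disjoint_sdiff_left).mono_right
        subset_union_right⟩
    · refine le_antisymm (hγeq ▸ Cardinal.mk_le_mk_of_subset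
        (union_subset h1R (hW1sub.trans diff_subset))) ?_
      rw [hγeq, ← hW1card]
      exact Cardinal.mk_le_mk_of_subset subset_union_right
    · have hW2card : #W2 = #R := by
        rw [hW2, Cardinal.mk_image_eq Subtype.val_injective,
          Cardinal.mk_range_eq _ (e.injective.comp Sum.inr_injective)]
        exact hWcard ▸ rfl
      refine le_antisymm (Cardinal.mk_le_mk_of_subset diff_subset) ?_
      rw [← hW2card]
      refine Cardinal.mk_le_mk_of_subset fun x hx => ?_
      refine ⟨(hW2sub hx).1, fun hmem => ?_⟩
      rcases hmem with hmem | hmem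
      · exact (hW2sub hx).2 (Or.inl hmem)
      · exact Set.disjoint_right.mp hW12 hx hmem
  · -- γ < #R
    have hle' : γ ≤ #(R \ F : Set α') := hWcard ▸ le_of_lt hγlt
    obtain ⟨S₀, hS₀sub, hS₀card⟩ : ∃ S₀ ⊆ (R \ F : Set α'), #(F1 ∪ S₀ : Set α') = γ := by
      rcases lt_or_ge γ ℵ₀ with hfin | hinf
      · obtain ⟨n, rfl⟩ := Cardinal.lt_aleph0.mp hfin
        obtain ⟨m, hm⟩ := Cardinal.lt_aleph0.mp (lt_of_le_of_lt hF1 hfin)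
        have hmn : m ≤ n := by exact_mod_cast hm ▸ hF1
        have hnm : ((n - m : ℕ) : Cardinal) ≤ #(R \ F : Set α') :=
          le_trans (by exact_mod_cast Nat.sub_le n m) hle'
        obtain ⟨S₀, hsub, hcard⟩ := Cardinal.le_mk_iff_exists_subset.mp hnm
        refine ⟨S₀, hsub, ?_⟩
        have hdisj : Disjoint F1 S₀ := Set.disjoint_left.mpr
          (fun x hx1 hx0 => (hsub hx0).2 (Or.inl hx1))
        rw [Cardinal.mk_union_of_disjoint hdisj, hm, hcard]
        have hq : ((m + (n - m) : ℕ) : Cardinal.{v}) = ((n : ℕ) : Cardinal.{v}) := by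
          rw [Nat.add_sub_cancel' hmn]
        exact_mod_cast hq
      · obtain ⟨S₀, hsub, hcard⟩ := Cardinal.le_mk_iff_exists_subset.mp hle'
        refine ⟨S₀, hsub, ?_⟩
        have hdisj : Disjoint F1 S₀ := Set.disjoint_left.mpr
          (fun x hx1 hx0 => (hsub hx0).2 (Or.inl hx1))
        rw [Cardinal.mk_union_of_disjoint hdisj, hcard]
        exact Cardinal.add_eq_right hinf (hF1.trans (le_of_eq rfl))
    have hSR : F1 ∪ S₀ ⊆ R := union_subset h1R (hS₀sub.trans diff_subset)
    refine ⟨F1 ∪ S₀, hSR, subset_union_left, ?_, hS₀card, ?_⟩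
    · exact disjoint_union_left.2 ⟨hd, Set.disjoint_left.mpr
        (fun x hx0 hx2 => (hS₀sub hx0).2 (Or.inr hx2))⟩
    · have hsum : #(R \ (F1 ∪ S₀) : Set α') + #(F1 ∪ S₀ : Set α') = #R :=
        Cardinal.mk_diff_add_mk hSR
      by_contra hne
      have hlt : #(R \ (F1 ∪ S₀) : Set α') < #R :=
        lt_of_le_of_ne (Cardinal.mk_le_mk_of_subset diff_subset) hne
      rw [hS₀card] at hsum
      exact absurd hsum (ne_of_lt (Cardinal.add_lt_of_lt hR hlt hγlt))

variable {K : Type u} {V : Type v} [DivisionRing K] [AddCommGroup V] [Module K V]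
variable {ι : Type w}

lemma li_of_subset (b : Module.Basis ι K V) {S : Set V} (hS : S ⊆ Set.range ⇑b) :
    LinearIndependent K ((↑) : S → V) :=
  (((linearIndepOn_id_range_iff b.injective).mpr b.linearIndependent).mono hS).linearIndependent

lemma rank_span_of_subset (b : Module.Basis ι K V) {S : Set V} (hS : S ⊆ Set.range ⇑b) :
    Module.rank K ↥(span K S) = #S :=
  rank_span_set (li_of_subset b hS)

lemma isCompl_span_s17 (b : Module.Basis ι K V) {S : Set V} (hS : S ⊆ Set.range ⇑b) :
    IsCompl (span K S) (span K (Set.range ⇑b \ S)) := by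
  constructor
  · have h1 : ⇑b '' (⇑b ⁻¹' S) = S := Set.image_preimage_eq_of_subset hS
    have h2 : ⇑b '' (⇑b ⁻¹' (Set.range ⇑b \ S)) = Set.range ⇑b \ S :=
      Set.image_preimage_eq_of_subset diff_subset
    have hd : Disjoint (⇑b ⁻¹' S) (⇑b ⁻¹' (Set.range ⇑b \ S)) := by
      rw [Set.disjoint_left]
      intro x hx1 hx2
      exact hx2.2 hx1
    have := b.linearIndependent.disjoint_span_image hd
    rwa [h1, h2] at this
  · rw [codisjoint_iff, ← Submodule.span_union, Set.union_diff_cancel hS, b.span_eq]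

lemma rank_quotient_span_s17 (b : Module.Basis ι K V) {S : Set V} (hS : S ⊆ Set.range ⇑b) :
    Module.rank K (V ⧸ span K S) = #(Set.range ⇑b \ S : Set V) := by
  rw [(Submodule.quotientEquivOfIsCompl _ _ (isCompl_span_s17 b hS)).rank_eq]
  exact rank_span_of_subset b diff_subset

lemma not_mem_span_of_not_mem (b : Module.Basis ι K V) {S : Set V} (hS : S ⊆ Set.range ⇑b)
    {j : ι} (hj : b j ∉ S) : b j ∉ span K S := by
  have h1 : ⇑b '' (⇑b ⁻¹' S) = S := Set.image_preimage_eq_of_subset hS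
  have := b.linearIndependent.notMem_span_image (s := ⇑b ⁻¹' S) hj
  rwa [h1] at this

lemma two_le_of_one_lt {β : Cardinal.{v}} (h : 1 < β) : (2 : Cardinal) ≤ β := by
  have h1 : Order.succ (1 : Cardinal) ≤ β := Order.succ_le_of_lt h
  refine le_trans ?_ h1
  have h2 := Cardinal.add_one_le_succ (1 : Cardinal)
  rwa [show (1:Cardinal)+1 = 2 by norm_num] at h2

lemma exists_span_mem (hα : ℵ₀ ≤ Module.rank K V) {β : Cardinal.{v}} (hβ1 : 1 < β)
    (hβ : β ≤ Module.rank K V) {G : Set (Submodule K V)}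
    (hG : G = Gsub K V β ∨ G = Gsup K V β) (b : Module.Basis ι K V)
    (F1 F2 : Set V) (h1 : F1.Finite) (h2 : F2.Finite)
    (h1R : F1 ⊆ Set.range ⇑b) (h2R : F2 ⊆ Set.range ⇑b) (hd : Disjoint F1 F2)
    (hc1 : #F1 ≤ 2) (hc2 : #F2 ≤ 2) :
    ∃ S : Set V, S ⊆ Set.range ⇑b ∧ F1 ⊆ S ∧ Disjoint S F2 ∧ span K S ∈ G := by
  have hR : #(Set.range ⇑b) = Module.rank K V := b.mk_range_eq_rank
  have hRinf : ℵ₀ ≤ #(Set.range ⇑b) := hR ▸ hα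
  have hβR : β ≤ #(Set.range ⇑b) := hR ▸ hβ
  have h2β : (2:Cardinal) ≤ β := two_le_of_one_lt hβ1
  rcases hG with rfl | rfl
  · obtain ⟨S, hSR, hF1S, hSd, hScard, hScompl⟩ :=
      exists_split hRinf hβR F1 F2 h1 h2 h1R h2R hd (hc1.trans h2β)
    refine ⟨S, hSR, hF1S, hSd, ?_, ?_⟩
    · rw [rank_span_of_subset b hSR, hScard]
    · rw [rank_quotient_span_s17 b hSR, hScompl, hR]
  · obtain ⟨C, hCR, hF2C, hCd, hCcard, hCcompl⟩ :=
      exists_split hRinf hβR F2 F1 h2 h1 h2R h1R hd.symm (hc2.trans h2β)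
    refine ⟨Set.range ⇑b \ C, diff_subset, ?_, ?_, ?_, ?_⟩
    · exact fun x hx => ⟨h1R hx, fun hxC => Set.disjoint_right.mp hCd hx hxC⟩
    · exact Set.disjoint_left.mpr fun x hx hx2 => hx.2 (hF2C hx2)
    · rw [rank_span_of_subset b diff_subset, hCcompl, hR]
    · rw [rank_quotient_span_s17 b diff_subset, Set.diff_diff_cancel_left hCR, hCcard]

lemma span_mem_pmSet {G : Set (Submodule K V)} (b : Module.Basis ι K V) {S : Set V}
    (hS : S ⊆ Set.range ⇑b) (hGmem : span K S ∈ G) {i j : ι}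
    (hi : b i ∈ S) (hj : b j ∉ S) : span K S ∈ pmSet K V G b i j := by
  have hap : span K S ∈ apartmentOf K V G (Set.range ⇑b) := ⟨hGmem, S, hS, rfl⟩
  exact ⟨⟨hap, Submodule.subset_span hi⟩, hap,
    fun h => not_mem_span_of_not_mem b hS hj h.2⟩

lemma mk_pair_le_two (x y : V) : #({x, y} : Set V) ≤ 2 := by
  have h := Cardinal.mk_insert_le (s := ({y} : Set V)) (a := x)
  rw [Cardinal.mk_singleton] at h
  exact h.trans_eq (by norm_num)

lemma pm_ne (hα : ℵ₀ ≤ Module.rank K V) {β : Cardinal.{v}} (hβ1 : 1 < β)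
    (hβ : β ≤ Module.rank K V) {G : Set (Submodule K V)}
    (hG : G = Gsub K V β ∨ G = Gsup K V β) (b : Module.Basis ι K V) {i j i' j' : ι}
    (hij : i ≠ j) (hij' : i' ≠ j') (hne : (i, j) ≠ (i', j')) :
    pmSet K V G b i j ≠ pmSet K V G b i' j' := by
  have binj : Function.Injective ⇑b := b.injective
  by_cases hii' : i = i'
  · subst hii'
    have hjj' : j ≠ j' := fun h => hne (by rw [h])
    obtain ⟨S, hSR, hF1, hdS, hGmem⟩ := exists_span_mem hα hβ1 hβ hG b
      {b i, b j'} {b j} ((Set.finite_singleton _).insert _) (Set.finite_singleton _)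
      (Set.insert_subset (Set.mem_range_self i)
        (Set.singleton_subset_iff.mpr (Set.mem_range_self j')))
      (Set.singleton_subset_iff.mpr (Set.mem_range_self j))
      (Set.disjoint_singleton_right.mpr (by
        rintro (h | h)
        · exact hij (binj h).symm
        · exact hjj' (binj h)))
      (mk_pair_le_two _ _) (by rw [Cardinal.mk_singleton]; norm_num)
    have hiS : b i ∈ S := hF1 (Set.mem_insert _ _)
    have hj'S : b j' ∈ S := hF1 (Set.mem_insert_of_mem _ rfl)
    have hjS : b j ∉ S := fun h => Set.disjoint_left.mp hdS h rfl
    have hX1 : span K S ∈ pmSet K V G b i j := span_mem_pmSet b hSR hGmem hiS hjS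
    have hX2 : span K S ∉ pmSet K V G b i j' :=
      fun h => h.2.2 ⟨h.1.1, Submodule.subset_span hj'S⟩
    exact fun heq => hX2 (heq ▸ hX1)
  · obtain ⟨S, hSR, hF1, hdS, hGmem⟩ := exists_span_mem hα hβ1 hβ hG b
      {b i} {b j, b i'} (Set.finite_singleton _) ((Set.finite_singleton _).insert _)
      (Set.singleton_subset_iff.mpr (Set.mem_range_self i))
      (Set.insert_subset (Set.mem_range_self j)
        (Set.singleton_subset_iff.mpr (Set.mem_range_self i')))
      (Set.disjoint_singleton_left.mpr (by
        rintro (h | h)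
        · exact hij (binj h)
        · exact hii' (binj h)))
      (by rw [Cardinal.mk_singleton]; norm_num) (mk_pair_le_two _ _)
    have hiS : b i ∈ S := hF1 rfl
    have hjS : b j ∉ S := fun h => Set.disjoint_left.mp hdS h (Set.mem_insert _ _)
    have hi'S : b i' ∉ S := fun h =>
      Set.disjoint_left.mp hdS h (Set.mem_insert_of_mem _ rfl)
    have hX1 : span K S ∈ pmSet K V G b i j := span_mem_pmSet b hSR hGmem hiS hjS
    have hX2 : span K S ∉ pmSet K V G b i' j' :=
      fun h => not_mem_span_of_not_mem b hSR hi'S h.1.2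
    exact fun heq => hX2 (heq ▸ hX1)

lemma pm_inj (hα : ℵ₀ ≤ Module.rank K V) {β : Cardinal.{v}} (hβ1 : 1 < β)
    (hβ : β ≤ Module.rank K V) {G : Set (Submodule K V)}
    (hG : G = Gsub K V β ∨ G = Gsup K V β) (b : Module.Basis ι K V) {i j i' j' : ι}
    (hij : i ≠ j) (hij' : i' ≠ j')
    (h : pmSet K V G b i j = pmSet K V G b i' j') : (i, j) = (i', j') := by
  by_contra hne
  exact pm_ne hα hβ1 hβ hG b hij hij' hne h

theorem stmt17' {ι : Type w} (hα : Cardinal.aleph0 ≤ Module.rank K V)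
    (β : Cardinal.{v}) (hβ1 : 1 < β) (hβ : β ≤ Module.rank K V)
    (G : Set (Submodule K V)) (hG : G = Gsub K V β ∨ G = Gsup K V β)
    (b : Module.Basis ι K V)
    (S : Set (Set (Submodule K V)))
    (hform : PMColl K V G b S)
    (hadj : PMMutuallyAdjacent K V G b S)
    (hmax : ∀ T : Set (Set (Submodule K V)), S ⊆ T →
      PMColl K V G b T → PMMutuallyAdjacent K V G b T → T = S) :
    ∃ i : ι,
      S = {s | ∃ j : ι, j ≠ i ∧ s = pmSet K V G b i j} ∨
      S = {s | ∃ j : ι, j ≠ i ∧ s = pmSet K V G b j i} := by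
  have hsep : ∀ {i j i' j' : ι}, i ≠ j → i' ≠ j' →
      pmSet K V G b i j = pmSet K V G b i' j' → (i, j) = (i', j') :=
    fun hij hij' h => pm_inj hα hβ1 hβ hG b hij hij' h
  have hrowColl : ∀ i : ι, PMColl K V G b {s | ∃ j, j ≠ i ∧ s = pmSet K V G b i j} :=
    fun i s hs => by obtain ⟨j, hj, rfl⟩ := hs; exact ⟨i, j, Ne.symm hj, rfl⟩
  have hrowAdj : ∀ i : ι,
      PMMutuallyAdjacent K V G b {s | ∃ j, j ≠ i ∧ s = pmSet K V G b i j} := by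
    intro i s hs t ht hst
    obtain ⟨j, hj, rfl⟩ := hs
    obtain ⟨j', hj', rfl⟩ := ht
    have hjj' : j ≠ j' := fun h => hst (by rw [h])
    exact ⟨i, j, i, j', Ne.symm hj, Ne.symm hj', rfl, rfl,
      fun h => hjj' (congrArg Prod.snd h), Or.inl rfl⟩
  have hcolColl : ∀ i : ι, PMColl K V G b {s | ∃ j, j ≠ i ∧ s = pmSet K V G b j i} :=
    fun i s hs => by obtain ⟨j, hj, rfl⟩ := hs; exact ⟨j, i, hj, rfl⟩
  have hcolAdj : ∀ i : ι,
      PMMutuallyAdjacent K V G b {s | ∃ j, j ≠ i ∧ s = pmSet K V G b j i} := by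
    intro i s hs t ht hst
    obtain ⟨j, hj, rfl⟩ := hs
    obtain ⟨j', hj', rfl⟩ := ht
    have hjj' : j ≠ j' := fun h => hst (by rw [h])
    exact ⟨j, i, j', i, hj, hj', rfl, rfl,
      fun h => hjj' (congrArg Prod.fst h), Or.inr rfl⟩
  rcases Set.eq_empty_or_nonempty S with rfl | ⟨s₀, hs₀⟩
  · exfalso
    have hinf : Infinite ↥(Set.range ⇑b) :=
      Cardinal.infinite_iff.mpr (b.mk_range_eq_rank ▸ hα)
    obtain ⟨x, y, hxy⟩ := exists_pair_ne ↥(Set.range ⇑b)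
    obtain ⟨i, hi⟩ := x.2
    obtain ⟨j, hj⟩ := y.2
    have hij : j ≠ i := fun h => hxy (Subtype.ext (by rw [← hi, ← hj, h]))
    have hrmax := hmax _ (Set.empty_subset _) (hrowColl i) (hrowAdj i)
    have : pmSet K V G b i j ∈ (∅ : Set (Set (Submodule K V))) :=
      hrmax ▸ ⟨j, hij, rfl⟩
    exact Set.notMem_empty _ this
  · obtain ⟨i₀, j₀, hi₀j₀, hs₀eq⟩ := hform s₀ hs₀
    by_cases hrow : ∀ s ∈ S, ∃ j, j ≠ i₀ ∧ s = pmSet K V G b i₀ j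
    · exact ⟨i₀, Or.inl (hmax _ hrow (hrowColl i₀) (hrowAdj i₀)).symm⟩
    · by_cases hcol : ∀ s ∈ S, ∃ j, j ≠ j₀ ∧ s = pmSet K V G b j j₀
      · exact ⟨j₀, Or.inr (hmax _ hcol (hcolColl j₀) (hcolAdj j₀)).symm⟩
      · exfalso
        push_neg at hrow hcol
        obtain ⟨s₁, hs₁S, hs₁⟩ := hrow
        obtain ⟨s₂, hs₂S, hs₂⟩ := hcol
        have hs₁ne : s₁ ≠ s₀ := fun h => hs₁ j₀ (Ne.symm hi₀j₀) (h.trans hs₀eq)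
        obtain ⟨a, c, a', c', hac, ha'c', he₀, he₁, hpne, hor⟩ :=
          hadj s₀ hs₀ s₁ hs₁S (Ne.symm hs₁ne)
        have h1 : (a, c) = (i₀, j₀) := hsep hac hi₀j₀ (he₀.symm.trans hs₀eq)
        have ha1 : a = i₀ := congrArg Prod.fst h1
        have hc1 : c = j₀ := congrArg Prod.snd h1
        have hc'j₀ : c' = j₀ := by
          rcases hor with h | h
          · have hne' : c' ≠ i₀ := fun hcc => ha'c' ((h.symm.trans ha1).trans hcc.symm)
            exact absurd (show s₁ = pmSet K V G b i₀ c' by rw [he₁, ← h, ha1])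
              (hs₁ c' hne')
          · exact h.symm.trans hc1
        have he₁' : s₁ = pmSet K V G b a' j₀ := by rw [he₁, hc'j₀]
        have ha'j₀ : a' ≠ j₀ := fun hh => ha'c' (hh.trans hc'j₀.symm)
        have ha'i₀ : a' ≠ i₀ := fun h => hpne (by rw [ha1, hc1, h, hc'j₀])
        have hs₂ne : s₂ ≠ s₀ := fun h => hs₂ i₀ hi₀j₀ (h.trans hs₀eq)
        obtain ⟨d, e, d', e', hde, hd'e', hf₀, hf₂, hqne, hqor⟩ :=
          hadj s₀ hs₀ s₂ hs₂S (Ne.symm hs₂ne)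
        have h2 : (d, e) = (i₀, j₀) := hsep hde hi₀j₀ (hf₀.symm.trans hs₀eq)
        have hd1 : d = i₀ := congrArg Prod.fst h2
        have he1c : e = j₀ := congrArg Prod.snd h2
        have hd'i₀ : d' = i₀ := by
          rcases hqor with h | h
          · exact h.symm.trans hd1
          · have hne' : d' ≠ j₀ := fun hh => hd'e' (hh.trans (h.symm.trans he1c).symm)
            exact absurd (show s₂ = pmSet K V G b d' j₀ by rw [hf₂, ← h, he1c])
              (hs₂ d' hne')
        have he'j₀ : e' ≠ j₀ := fun h => hqne (by rw [hd1, he1c, hd'i₀, h])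
        have hf₂' : s₂ = pmSet K V G b i₀ e' := by rw [hf₂, hd'i₀]
        have hi₀e' : i₀ ≠ e' := fun hh => hd'e' (hd'i₀.trans hh)
        have h12 : s₁ ≠ s₂ := fun h =>
          ha'i₀ (congrArg Prod.fst (hsep ha'j₀ hi₀e' (he₁'.symm.trans (h.trans hf₂'))))
        obtain ⟨p, q, p', q', hpq, hp'q', hg₁, hg₂, hgne, hgor⟩ :=
          hadj s₁ hs₁S s₂ hs₂S h12
        have h3 : (p, q) = (a', j₀) := hsep hpq ha'j₀ (hg₁.symm.trans he₁')
        have h4 : (p', q') = (i₀, e') := hsep hp'q' hi₀e' (hg₂.symm.trans hf₂')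
        rcases hgor with h | h
        · exact ha'i₀ ((congrArg Prod.fst h3).symm.trans
            (h.trans (congrArg Prod.fst h4)))
        · exact he'j₀ ((congrArg Prod.snd h4).symm.trans
            (h.symm.trans (congrArg Prod.snd h3)))



variable {K : Type u} {V : Type v} [DivisionRing K] [AddCommGroup V] [Module K V]

/-- Every maximal collection of mutually adjacent complementary subsets of an apartment
is `{A(+i,−j)}_{j ≠ i}` or `{A(+j,−i)}_{j ≠ i}` for some `i`. -/
theorem stmt17 {ι : Type w} (hα : Cardinal.aleph0 ≤ Module.rank K V)
    (β : Cardinal.{v}) (hβ1 : 1 < β) (hβ : β ≤ Module.rank K V)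
    (G : Set (Submodule K V)) (hG : G = Gsub K V β ∨ G = Gsup K V β)
    (b : Module.Basis ι K V)
    (S : Set (Set (Submodule K V)))
    (hform : PMColl K V G b S)
    (hadj : PMMutuallyAdjacent K V G b S)
    (hmax : ∀ T : Set (Set (Submodule K V)), S ⊆ T →
      PMColl K V G b T → PMMutuallyAdjacent K V G b T → T = S) :
    ∃ i : ι,
      S = {s | ∃ j : ι, j ≠ i ∧ s = pmSet K V G b i j} ∨
      S = {s | ∃ j : ι, j ≠ i ∧ s = pmSet K V G b j i} := by
  exact stmt17' hα β hβ1 hβ G hG b S hform hadj hmax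
end

section
/- Let β ≤ α be an infinite cardinal and let G be one of the Grassmannians G_β(V) or G^β(V). Then for all X, Y ∈ G, X and Y lie in the same connected component of the Grassmann graph Γ(G) if and only if dim X/(X∩Y) = dim Y/(X∩Y) and this common dimension is finite. -/
/- Setting: `V` is a left vector space over a division ring `K` whose dimension
`α = Module.rank K V` is an infinite cardinal. -/

universe u v w

section Defs

variable (K : Type u) (V : Type v) [DivisionRing K] [AddCommGroup V] [Module K V]

/-- `X` and `Y` are adjacent: `X ∩ Y` has codimension 1 in both `X` and `Y`,
i.e. `dim X/(X∩Y) = dim Y/(X∩Y) = 1`. -/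
def AdjacentSub (X Y : Submodule K V) : Prop :=
  Module.rank K (↥X ⧸ Submodule.comap X.subtype (X ⊓ Y)) = 1 ∧
  Module.rank K (↥Y ⧸ Submodule.comap Y.subtype (X ⊓ Y)) = 1

/-- `X` and `Y` lie in the same connected component of the Grassmann graph `Γ(G)`:
they are joined by a finite path of adjacent elements of `G`. -/
def SameComponent (G : Set (Submodule K V)) (X Y : Submodule K V) : Prop :=
  Relation.ReflTransGen (fun A B => A ∈ G ∧ B ∈ G ∧ AdjacentSub K V A B) X Y

/-- `C` is a connected component of the Grassmann graph `Γ(G)`. -/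
def IsConnComponent (G : Set (Submodule K V)) (C : Set (Submodule K V)) : Prop :=
  ∃ X ∈ G, C = {Y | Y ∈ G ∧ SameComponent K V G X Y}

end Defs

variable {K : Type u} {V : Type v} [DivisionRing K] [AddCommGroup V] [Module K V]

/-! ### Auxiliary material: relative rank of a pair of nested submodules -/

/-- The rank of `q / p` (meaningful when `p ≤ q`). -/
noncomputable def crk {M : Type w} [AddCommGroup M] [Module K M] (p q : Submodule K M) :
    Cardinal :=
  Module.rank K (↥q ⧸ Submodule.comap q.subtype p)

section CrkLemmas

variable {M : Type w} [AddCommGroup M] [Module K M]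

lemma crk_def (p q : Submodule K M) :
    crk p q = Module.rank K (↥q ⧸ Submodule.comap q.subtype p) := rfl

lemma crk_quot {p q : Submodule K M} (h : p ≤ q) :
    Module.rank K (M ⧸ p) = Module.rank K (M ⧸ q) + crk p q := by
  have e1 := Submodule.quotientQuotientEquivQuotient p q h
  have hr2 : Module.rank K ↥(q.map p.mkQ) = crk p q := by
    have e := (p.mkQ.comp q.subtype).quotKerEquivRange
    have hker : LinearMap.ker (p.mkQ.comp q.subtype) = Submodule.comap q.subtype p := by
      rw [LinearMap.ker_comp, Submodule.ker_mkQ]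
    have hrange : LinearMap.range (p.mkQ.comp q.subtype) = q.map p.mkQ := by
      rw [LinearMap.range_comp, Submodule.range_subtype]
    rw [hker, hrange] at e
    exact e.symm.rank_eq
  calc Module.rank K (M ⧸ p)
      = Module.rank K ((M ⧸ p) ⧸ q.map p.mkQ) + Module.rank K ↥(q.map p.mkQ) :=
        (Submodule.rank_quotient_add_rank _).symm
    _ = Module.rank K (M ⧸ q) + crk p q := by rw [e1.rank_eq, hr2]

lemma crk_tower {p q r : Submodule K M} (hpq : p ≤ q) (hqr : q ≤ r) :
    crk p r = crk q r + crk p q := by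
  have h1 := crk_quot (K := K) (M := ↥r) (Submodule.comap_mono (f := r.subtype) hpq)
  have h2 : crk (Submodule.comap r.subtype p) (Submodule.comap r.subtype q) = crk p q := by
    have hmap : (Submodule.comap (Submodule.comap r.subtype q).subtype
        (Submodule.comap r.subtype p)).map
        ((Submodule.comapSubtypeEquivOfLe hqr : ↥(Submodule.comap r.subtype q) ≃ₗ[K] ↥q) :
          ↥(Submodule.comap r.subtype q) →ₗ[K] ↥q)
        = Submodule.comap q.subtype p := by
      ext x
      constructor
      · rintro ⟨y, hy, rfl⟩
        simpa using hy
      · intro hxp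
        exact ⟨⟨⟨(x : M), hqr x.2⟩, x.2⟩, by simpa using hxp, rfl⟩
    exact (Submodule.Quotient.equiv _ _ _ hmap).rank_eq
  rw [crk_def p r, crk_def q r]
  rw [← h2]
  exact h1

lemma crk_add_rank {p q : Submodule K M} (h : p ≤ q) :
    crk p q + Module.rank K ↥p = Module.rank K ↥q := by
  rw [crk_def, ← (Submodule.comapSubtypeEquivOfLe h).rank_eq]
  exact Submodule.rank_quotient_add_rank _

lemma crk_eq_zero {p q : Submodule K M} : crk p q = 0 ↔ q ≤ p := by
  rw [crk_def, rank_zero_iff, Submodule.Quotient.subsingleton_iff,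
    Submodule.comap_subtype_eq_top]

lemma crk_inf_sup (p q : Submodule K M) : crk (p ⊓ q) p = crk q (p ⊔ q) :=
  (LinearMap.quotientInfEquivSupQuotient p q).rank_eq

lemma crk_bot (q : Submodule K M) : crk ⊥ q = Module.rank K ↥q := by
  rw [crk_def]
  exact (Submodule.quotEquivOfEqBot _ (by rw [Submodule.comap_bot, Submodule.ker_subtype])).rank_eq

lemma crk_sup_disjoint {p s : Submodule K M} (h : s ⊓ p = ⊥) :
    crk p (p ⊔ s) = Module.rank K ↥s := by
  have := crk_inf_sup s p
  rw [h, crk_bot, sup_comm] at this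
  exact this.symm

lemma span_inf_eq_bot {p : Submodule K M} {y : M} (hy : y ∉ p) :
    Submodule.span K {y} ⊓ p = ⊥ := by
  rw [eq_bot_iff]
  rintro v ⟨hv1, hv2⟩
  obtain ⟨c, rfl⟩ := Submodule.mem_span_singleton.mp hv1
  rcases eq_or_ne c 0 with rfl | hc
  · simp
  · exact absurd (by simpa [smul_smul, inv_mul_cancel₀ hc] using p.smul_mem c⁻¹ hv2) hy

lemma rank_span_singleton' {y : M} (hy : y ≠ 0) :
    Module.rank K ↥(Submodule.span K {y}) = 1 := by
  have e := (LinearEquiv.toSpanNonzeroSingleton K M y hy).lift_rank_eq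
  rw [Module.rank_self, Cardinal.lift_one, eq_comm, Cardinal.lift_eq_one] at e
  exact e

lemma crk_sup_singleton {p : Submodule K M} {y : M} (hy : y ∉ p) :
    crk p (p ⊔ Submodule.span K {y}) = 1 := by
  rw [crk_sup_disjoint (span_inf_eq_bot hy), rank_span_singleton']
  rintro rfl; exact hy p.zero_mem

lemma card_cancel {a b c : Cardinal} (hc : c < Cardinal.aleph0)
    (h : a + c = b + c) : a = b := by
  obtain ⟨n, rfl⟩ := Cardinal.lt_aleph0.mp hc
  clear hc
  induction n with
  | zero => simpa using h
  | succ k ih =>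
    apply ih
    have h' : a + ((k : Cardinal) + 1) = b + ((k : Cardinal) + 1) := by
      simpa [Nat.cast_succ] using h
    rw [← add_assoc, ← add_assoc] at h'
    exact Cardinal.add_one_inj.mp h'

lemma exists_hyperplane {p q : Submodule K M} (hpq : p ≤ q) (h0 : crk p q ≠ 0) :
    ∃ H, p ≤ H ∧ H ≤ q ∧ crk H q = 1 := by
  set p' := Submodule.comap q.subtype p with hp'
  have hnt : Nontrivial (↥q ⧸ p') := by
    rw [← not_subsingleton_iff_nontrivial]
    intro hs
    exact h0 (by rw [crk_def, rank_zero_iff]; exact hs)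
  obtain ⟨v, hv⟩ := exists_ne (0 : ↥q ⧸ p')
  obtain ⟨S, hS⟩ := Submodule.exists_isCompl (Submodule.span K {v})
  have h1 : p' ≤ Submodule.comap p'.mkQ S := by
    intro x hx
    simp only [Submodule.mem_comap]
    have hz : p'.mkQ x = 0 := by rwa [Submodule.mkQ_apply, Submodule.Quotient.mk_eq_zero]
    rw [hz]; exact S.zero_mem
  refine ⟨(Submodule.comap p'.mkQ S).map q.subtype, ?_, Submodule.map_subtype_le _ _, ?_⟩
  · calc p = Submodule.map q.subtype p' := by
              rw [hp', Submodule.map_comap_subtype, inf_eq_right.mpr hpq]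
    _ ≤ _ := Submodule.map_mono h1
  · have hc : Submodule.comap q.subtype ((Submodule.comap p'.mkQ S).map q.subtype)
        = Submodule.comap p'.mkQ S :=
      Submodule.comap_map_eq_of_injective q.injective_subtype _
    rw [crk_def, hc]
    have e1 := Submodule.quotientQuotientEquivQuotient p' (Submodule.comap p'.mkQ S) h1
    have hmap : (Submodule.comap p'.mkQ S).map p'.mkQ = S := by
      rw [Submodule.map_comap_eq, Submodule.range_mkQ, top_inf_eq]
    rw [hmap] at e1
    rw [← e1.rank_eq]
    rw [(Submodule.quotientEquivOfIsCompl S (Submodule.span K {v}) hS.symm).rank_eq]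
    exact rank_span_singleton' hv

/-- Commensurability with equal relative dimensions. -/
def CommRel (X Y : Submodule K M) : Prop :=
  crk (X ⊓ Y) X = crk (X ⊓ Y) Y ∧ crk (X ⊓ Y) X < Cardinal.aleph0

lemma commRel_refl (X : Submodule K M) : CommRel X X := by
  have h0 : crk (X ⊓ X) X = 0 := crk_eq_zero.mpr (le_inf le_rfl le_rfl)
  exact ⟨rfl, by rw [h0]; exact Cardinal.aleph0_pos⟩

lemma commRel_trans {X Y Z : Submodule K M} (h1 : CommRel X Y) (h2 : CommRel Y Z) :
    CommRel X Z := by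
  obtain ⟨e1, f1⟩ := h1
  obtain ⟨e2, f2⟩ := h2
  set W := (X ⊓ Y) ⊓ (Y ⊓ Z) with hW
  have hWXY : W ≤ X ⊓ Y := inf_le_left
  have hWYZ : W ≤ Y ⊓ Z := inf_le_right
  have hWX : W ≤ X := hWXY.trans inf_le_left
  have hWY : W ≤ Y := hWXY.trans inf_le_right
  have hWZ : W ≤ Z := hWYZ.trans inf_le_right
  have hWXZ : W ≤ X ⊓ Z := le_inf hWX hWZ
  have tX : crk W X = crk (X ⊓ Y) X + crk W (X ⊓ Y) := crk_tower hWXY inf_le_left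
  have tY : crk W Y = crk (X ⊓ Y) Y + crk W (X ⊓ Y) := crk_tower hWXY inf_le_right
  have tY' : crk W Y = crk (Y ⊓ Z) Y + crk W (Y ⊓ Z) := crk_tower hWYZ inf_le_left
  have tZ : crk W Z = crk (Y ⊓ Z) Z + crk W (Y ⊓ Z) := crk_tower hWYZ inf_le_right
  have hseq : crk W (X ⊓ Y) = crk (Y ⊓ Z) ((X ⊓ Y) ⊔ (Y ⊓ Z)) := crk_inf_sup _ _
  have hsle : crk (Y ⊓ Z) ((X ⊓ Y) ⊔ (Y ⊓ Z)) ≤ crk (Y ⊓ Z) Y := by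
    rw [crk_tower (le_sup_right : Y ⊓ Z ≤ (X ⊓ Y) ⊔ (Y ⊓ Z))
      (sup_le inf_le_right inf_le_left : (X ⊓ Y) ⊔ (Y ⊓ Z) ≤ Y)]
    exact self_le_add_left _ _
  have fXY' : crk (X ⊓ Y) Y < Cardinal.aleph0 := e1 ▸ f1
  have fW_XY : crk W (X ⊓ Y) < Cardinal.aleph0 := lt_of_le_of_lt (hseq ▸ hsle) f2
  have fWY : crk W Y < Cardinal.aleph0 := by
    rw [tY]; exact Cardinal.add_lt_aleph0 fXY' fW_XY
  have eXY : crk W X = crk W Y := by rw [tX, tY, e1]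
  have eYZ : crk W Y = crk W Z := by rw [tY', tZ, e2]
  have fWX : crk W X < Cardinal.aleph0 := by rw [eXY]; exact fWY
  have fWZ : crk W Z < Cardinal.aleph0 := by rw [← eYZ]; exact fWY
  have tX2 : crk W X = crk (X ⊓ Z) X + crk W (X ⊓ Z) := crk_tower hWXZ inf_le_left
  have tZ2 : crk W Z = crk (X ⊓ Z) Z + crk W (X ⊓ Z) := crk_tower hWXZ inf_le_right
  have fWXZ : crk W (X ⊓ Z) < Cardinal.aleph0 :=
    lt_of_le_of_lt (by rw [tX2]; exact self_le_add_left _ _) fWX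
  constructor
  · apply card_cancel fWXZ
    rw [← tX2, ← tZ2, eXY, eYZ]
  · exact lt_of_le_of_lt (by rw [tX2]; exact self_le_add_right _ _) fWX

end CrkLemmas

lemma adjacentSub_iff {A B : Submodule K V} :
    AdjacentSub K V A B ↔ crk (A ⊓ B) A = 1 ∧ crk (A ⊓ B) B = 1 := Iff.rfl

lemma commRel_of_adjacent {A B : Submodule K V} (h : AdjacentSub K V A B) : CommRel A B := by
  obtain ⟨h1, h2⟩ := adjacentSub_iff.mp h
  exact ⟨h1.trans h2.symm, h1 ▸ Cardinal.one_lt_aleph0⟩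

lemma backward_path {β : Cardinal.{v}} (G : Set (Submodule K V))
    (hG : G = Gsub K V β ∨ G = Gsup K V β) :
    ∀ n : ℕ, ∀ X ∈ G, ∀ Y ∈ G, crk (X ⊓ Y) X = n → crk (X ⊓ Y) Y = n →
      SameComponent K V G X Y := by
  intro n
  induction n with
  | zero =>
    intro X hX Y hY hXY hYX
    have h1 : X ≤ Y := le_trans (crk_eq_zero.mp (by simpa using hXY)) inf_le_right
    have h2 : Y ≤ X := le_trans (crk_eq_zero.mp (by simpa using hYX)) inf_le_left
    rw [le_antisymm h1 h2]
    exact Relation.ReflTransGen.refl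
  | succ n ih =>
    intro X hX Y hY hXY hYX
    have hA : X ⊓ Y ≤ X := inf_le_left
    -- pick y ∈ Y \ X
    have hyex : ∃ y, y ∈ Y ∧ y ∉ X ⊓ Y := by
      by_contra hc
      push_neg at hc
      have h0 : crk (X ⊓ Y) Y = 0 := crk_eq_zero.mpr hc
      rw [hYX] at h0
      exact Nat.succ_ne_zero n (by exact_mod_cast h0)
    obtain ⟨y, hyY, hyA⟩ := hyex
    have hyX : y ∉ X := fun h => hyA ⟨h, hyY⟩
    -- pick a hyperplane H of X containing X ⊓ Y
    obtain ⟨H, hAH, hHX, hH1⟩ := exists_hyperplane hA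
      (by rw [hXY]; exact_mod_cast Nat.succ_ne_zero n)
    have hyH : y ∉ H := fun h => hyX (hHX h)
    have tower1 : crk (X ⊓ Y) X = crk H X + crk (X ⊓ Y) H := crk_tower hAH hHX
    have hAHn : crk (X ⊓ Y) H = n := by
      apply card_cancel (c := (1 : Cardinal)) Cardinal.one_lt_aleph0
      have t1 : ((n + 1 : ℕ) : Cardinal) = 1 + crk (X ⊓ Y) H := by rw [← hH1, ← tower1, hXY]
      rw [add_comm (crk (X ⊓ Y) H) 1, ← t1]
      push_cast
      ring
    set s := Submodule.span K {y} with hsdef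
    set Z := H ⊔ s with hZdef
    have hsY : s ≤ Y := Submodule.span_le.mpr (Set.singleton_subset_iff.mpr hyY)
    have hXZ : X ⊓ Z = H := by
      apply le_antisymm
      · rintro v ⟨hvX, hvZ⟩
        obtain ⟨h, hh, w, hw, rfl⟩ := Submodule.mem_sup.mp hvZ
        obtain ⟨c, rfl⟩ := Submodule.mem_span_singleton.mp hw
        rcases eq_or_ne c 0 with rfl | hc
        · simpa using hh
        · exfalso
          apply hyX
          have hcy : c • y ∈ X := by
            have := X.sub_mem hvX (hHX hh)
            simpa using this
          simpa [smul_smul, inv_mul_cancel₀ hc] using X.smul_mem c⁻¹ hcy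
      · exact le_inf hHX le_sup_left
    have hyZ : y ∈ Z := Submodule.mem_sup_right (Submodule.mem_span_singleton_self y)
    have hZY : Z ⊓ Y = (X ⊓ Y) ⊔ s := by
      apply le_antisymm
      · rintro v ⟨hvZ, hvY⟩
        obtain ⟨h, hh, w, hw, rfl⟩ := Submodule.mem_sup.mp hvZ
        have hwY : w ∈ Y := hsY hw
        have hhY : h ∈ Y := by
          have := Y.sub_mem hvY hwY
          simpa using this
        exact Submodule.mem_sup.mpr ⟨h, ⟨hHX hh, hhY⟩, w, hw, rfl⟩
      · exact sup_le (le_inf (hAH.trans le_sup_left) inf_le_right) (le_inf le_sup_right hsY)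
    have hHZ1 : crk H Z = 1 := crk_sup_singleton hyH
    have hadj : AdjacentSub K V X Z := by
      rw [adjacentSub_iff, hXZ]
      exact ⟨hH1, hHZ1⟩
    -- Z has the same rank and corank as X
    have hrZ : Module.rank K ↥Z = Module.rank K ↥X := by
      have r1 := crk_add_rank (le_sup_left : H ≤ Z)
      have r2 := crk_add_rank hHX
      rw [hHZ1] at r1
      rw [hH1] at r2
      rw [← r1, ← r2]
    have hcZ : Module.rank K (V ⧸ Z) = Module.rank K (V ⧸ X) := by
      have q1 := crk_quot (hHX : H ≤ X)
      have q2 := crk_quot (le_sup_left : H ≤ Z)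
      rw [hH1] at q1
      rw [hHZ1] at q2
      exact card_cancel Cardinal.one_lt_aleph0 (q2.symm.trans q1)
    have hZG : Z ∈ G := by
      rcases hG with rfl | rfl
      · simp only [Gsub, Set.mem_setOf_eq] at hX ⊢
        exact ⟨hrZ.trans hX.1, hcZ.trans hX.2⟩
      · simp only [Gsup, Set.mem_setOf_eq] at hX ⊢
        exact ⟨hrZ.trans hX.1, hcZ.trans hX.2⟩
    -- distances from Z to Y
    have hZYd : crk (Z ⊓ Y) Z = n := by
      rw [hZY]
      have hsecond := crk_inf_sup H ((X ⊓ Y) ⊔ s)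
      have hHsup : H ⊔ ((X ⊓ Y) ⊔ s) = Z := by
        rw [← sup_assoc, sup_eq_left.mpr hAH]
      have hHinf : H ⊓ ((X ⊓ Y) ⊔ s) = X ⊓ Y := by
        apply le_antisymm
        · rintro v ⟨hvH, hvAs⟩
          obtain ⟨a, ha, w, hw, rfl⟩ := Submodule.mem_sup.mp hvAs
          obtain ⟨c, rfl⟩ := Submodule.mem_span_singleton.mp hw
          rcases eq_or_ne c 0 with rfl | hc
          · simpa using ha
          · exfalso
            apply hyX
            have hcy : c • y ∈ X := by
              have := X.sub_mem (hHX hvH) (ha.1 : a ∈ X)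
              simpa using this
            simpa [smul_smul, inv_mul_cancel₀ hc] using X.smul_mem c⁻¹ hcy
        · exact le_inf hAH le_sup_left
      rw [hHinf, hHsup] at hsecond
      rw [← hsecond]
      exact hAHn
    have hZYd' : crk (Z ⊓ Y) Y = n := by
      rw [hZY]
      have t := crk_tower (le_sup_left : X ⊓ Y ≤ (X ⊓ Y) ⊔ s)
        (sup_le inf_le_right hsY : (X ⊓ Y) ⊔ s ≤ Y)
      rw [hYX, crk_sup_singleton hyA] at t
      apply card_cancel (c := (1 : Cardinal)) Cardinal.one_lt_aleph0
      rw [← t]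
      push_cast
      ring
    exact Relation.ReflTransGen.head ⟨hX, hZG, hadj⟩ (ih Z hZG Y hY hZYd hZYd')

/-- For infinite `β`, two elements `X, Y` of `G` lie in the same connected component
of the Grassmann graph if and only if `dim X/(X∩Y) = dim Y/(X∩Y) < ∞`. -/
theorem stmt18 (hα : Cardinal.aleph0 ≤ Module.rank K V)
    (β : Cardinal.{v}) (hβinf : Cardinal.aleph0 ≤ β) (hβ : β ≤ Module.rank K V)
    (G : Set (Submodule K V)) (hG : G = Gsub K V β ∨ G = Gsup K V β) :
    ∀ X ∈ G, ∀ Y ∈ G,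
      (SameComponent K V G X Y ↔
        (Module.rank K (↥X ⧸ Submodule.comap X.subtype (X ⊓ Y)) =
          Module.rank K (↥Y ⧸ Submodule.comap Y.subtype (X ⊓ Y)) ∧
        Module.rank K (↥X ⧸ Submodule.comap X.subtype (X ⊓ Y)) < Cardinal.aleph0)) := by
  intro X hX Y hY
  constructor
  · intro h
    have h' : Relation.ReflTransGen (fun A B => A ∈ G ∧ B ∈ G ∧ AdjacentSub K V A B) X Y := h
    clear h
    suffices hs : CommRel X Y from hs
    clear hX hY
    induction h' with
    | refl => exact commRel_refl X
    | tail _ hadj ih => exact commRel_trans ih (commRel_of_adjacent hadj.2.2)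
  · rintro ⟨heq, hfin⟩
    obtain ⟨n, hn⟩ := Cardinal.lt_aleph0.mp hfin
    refine backward_path G hG n X hX Y hY hn ?_
    show Module.rank K (↥Y ⧸ Submodule.comap Y.subtype (X ⊓ Y)) = (n : Cardinal)
    rw [← heq]
    exact hn
end

section
/- Let β ≤ α be an infinite cardinal, let G be one of the Grassmannians G_β(V) or G^β(V), and let C and C' be connected components of the Grassmann graph Γ(G). If f : C → C' is a bijection such that both f and f⁻¹ map every apartment of the respective connected component onto an apartment of the other, then f is adjacency preserving in both directions: for all X, Y ∈ C, X and Y are adjacent if and only if f(X) and f(Y) are adjacent. -/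
/- Setting: `V` is a left vector space over a division ring `K` whose dimension
`α = Module.rank K V` is an infinite cardinal. -/

universe u v w

namespace Stmt19Aux
open Submodule Set Cardinal

variable {K : Type u} {V : Type v} [DivisionRing K] [AddCommGroup V] [Module K V]
variable {B : Set V}

noncomputable def bas (hB : IsBasisSet K V B) : Module.Basis B K V :=
  Module.Basis.mk hB.1 (by rw [Subtype.range_coe]; exact hB.2.ge)

lemma bas_apply (hB : IsBasisSet K V B) (i : B) : bas hB i = (i : V) := by
  simp [bas]

lemma bas_coe (hB : IsBasisSet K V B) : ⇑(bas hB) = ((↑) : B → V) :=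
  funext (bas_apply hB)

/-- support of a vector w.r.t. the basis set `B`, as a subset of `V`. -/
noncomputable def vsupp (hB : IsBasisSet K V B) (x : V) : Set V :=
  Subtype.val '' (((bas hB).repr x).support : Set B)

lemma vsupp_subset (hB : IsBasisSet K V B) (x : V) : vsupp hB x ⊆ B := by
  rintro v ⟨i, _, rfl⟩; exact i.2

lemma mem_span_iff_vsupp (hB : IsBasisSet K V B) {s : Set V} (hs : s ⊆ B) {x : V} :
    x ∈ span K s ↔ vsupp hB x ⊆ s := by
  have himg : (⇑(bas hB)) '' (Subtype.val ⁻¹' s) = s := by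
    rw [bas_coe hB, Subtype.image_preimage_coe, Set.inter_eq_right.2 hs]
  constructor
  · intro hx
    have := (Module.Basis.mem_span_image (bas hB)).1 (by rw [himg]; exact hx)
    rintro v ⟨i, hi, rfl⟩
    exact this hi
  · intro hx
    have : (((bas hB).repr x).support : Set B) ⊆ Subtype.val ⁻¹' s := by
      intro i hi
      exact hx ⟨i, hi, rfl⟩
    have := (Module.Basis.mem_span_image (bas hB)).2 this
    rwa [himg] at this

lemma mem_span_vsupp (hB : IsBasisSet K V B) (x : V) : x ∈ span K (vsupp hB x) :=
  (mem_span_iff_vsupp hB (vsupp_subset hB x)).2 (subset_refl _)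

lemma basis_mem_span_iff (hB : IsBasisSet K V B) {s : Set V} (hs : s ⊆ B) {b : V}
    (hb : b ∈ B) : b ∈ span K s ↔ b ∈ s := by
  constructor
  · intro h
    have hrepr : (bas hB).repr b = Finsupp.single ⟨b, hb⟩ 1 := by
      have : b = bas hB ⟨b, hb⟩ := by rw [bas_apply hB]
      conv_lhs => rw [this]
      exact Module.Basis.repr_self _ _
    have h2 := (mem_span_iff_vsupp hB hs).1 h
    apply h2
    refine ⟨⟨b, hb⟩, ?_, rfl⟩
    rw [hrepr]
    simp
  · intro h; exact subset_span h

lemma span_le_span_iff (hB : IsBasisSet K V B) {s t : Set V} (hs : s ⊆ B) (ht : t ⊆ B) :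
    span K s ≤ span K t ↔ s ⊆ t := by
  constructor
  · intro h v hv
    exact (basis_mem_span_iff hB ht (hs hv)).1 (h (subset_span hv))
  · exact span_mono

lemma span_inj (hB : IsBasisSet K V B) {s t : Set V} (hs : s ⊆ B) (ht : t ⊆ B)
    (h : span K s = span K t) : s = t :=
  le_antisymm ((span_le_span_iff hB hs ht).1 h.le) ((span_le_span_iff hB ht hs).1 h.ge)

lemma span_inter (hB : IsBasisSet K V B) {s t : Set V} (hs : s ⊆ B) (ht : t ⊆ B) :
    span K (s ∩ t) = span K s ⊓ span K t := by
  refine le_antisymm (le_inf (span_mono inter_subset_left) (span_mono inter_subset_right)) ?_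
  intro x hx
  have h1 := (mem_span_iff_vsupp hB hs).1 hx.1
  have h2 := (mem_span_iff_vsupp hB ht).1 hx.2
  exact span_mono (subset_inter h1 h2) (mem_span_vsupp hB x)

lemma span_iInter (hB : IsBasisSet K V B) {ι : Sort w} (U : ι → Set V)
    (hU : ∀ i, U i ⊆ B) : span K (⋂ i, U i) = ⨅ i, span K (U i) := by
  refine le_antisymm (le_iInf fun i => span_mono (iInter_subset _ i)) ?_
  intro x hx
  rw [Submodule.mem_iInf] at hx
  have : vsupp hB x ⊆ ⋂ i, U i :=
    subset_iInter fun i => (mem_span_iff_vsupp hB (hU i)).1 (hx i)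
  exact span_mono this (mem_span_vsupp hB x)



lemma rank_quotient_span_image {ι : Type v} {W : Type v} [AddCommGroup W] [Module K W]
    (b : Module.Basis ι K W) (J : Set ι) :
    Module.rank K (W ⧸ span K (⇑b '' J)) = #(↥(Jᶜ)) := by
  have hdis : Disjoint (span K (⇑b '' J)) (span K (⇑b '' Jᶜ)) := by
    rw [disjoint_def]
    intro x hxJ hxJc
    have h1 := (Module.Basis.mem_span_image b).1 hxJ
    have h2 := (Module.Basis.mem_span_image b).1 hxJc
    have : ((b.repr x).support : Set ι) = ∅ := by
      apply Set.eq_empty_of_subset_empty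
      intro i hi
      exact (h2 hi) (h1 hi)
    have hsupp : (b.repr x).support = ∅ := by exact_mod_cast this
    have : b.repr x = 0 := Finsupp.support_eq_empty.1 hsupp
    exact (LinearEquiv.map_eq_zero_iff b.repr).1 this
  have hcod : Codisjoint (span K (⇑b '' J)) (span K (⇑b '' Jᶜ)) := by
    rw [codisjoint_iff, ← Submodule.span_union, ← Set.image_union, Set.union_compl_self,
      Set.image_univ, b.span_eq]
  have e1 := (Submodule.quotientEquivOfIsCompl _ _ ⟨hdis, hcod⟩).rank_eq
  rw [e1]
  have hli : LinearIndependent K (fun x : ↥(⇑b '' Jᶜ) => (x : W)) := by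
    have h1 : LinearIndependent K (⇑b ∘ (Subtype.val : ↥(Jᶜ) → ι)) :=
      b.linearIndependent.comp _ Subtype.val_injective
    have h2 := (linearIndepOn_id_range_iff (b.injective.comp Subtype.val_injective)).2 h1
    have : Set.range (⇑b ∘ (Subtype.val : ↥(Jᶜ) → ι)) = ⇑b '' Jᶜ := by
      rw [Set.range_comp, Subtype.range_coe]
    rwa [this] at h2
  rw [rank_span_set hli]
  exact Cardinal.mk_image_eq b.injective

lemma rank_span_sub (hB : IsBasisSet K V B) {s : Set V} (hs : s ⊆ B) :
    Module.rank K ↥(span K s) = #(↥s) :=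
  rank_span_set (LinearIndepOn.mono hB.1 hs)

lemma rank_quot_V (hB : IsBasisSet K V B) {s : Set V} (hs : s ⊆ B) :
    Module.rank K (V ⧸ span K s) = #(↥(B \ s)) := by
  have himg : (⇑(bas hB)) '' (Subtype.val ⁻¹' s) = s := by
    rw [bas_coe hB, Subtype.image_preimage_coe, Set.inter_eq_right.2 hs]
  have := rank_quotient_span_image (bas hB) (Subtype.val ⁻¹' s)
  rw [himg] at this
  rw [this]
  apply Cardinal.mk_congr
  exact {
    toFun := fun x => ⟨(x : B), (x : B).2, x.2⟩
    invFun := fun y => ⟨⟨(y : V), y.2.1⟩, y.2.2⟩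
    left_inv := fun x => rfl
    right_inv := fun y => rfl }

noncomputable def basisOfSpan (hB : IsBasisSet K V B) {s : Set V} (hs : s ⊆ B) :
    Module.Basis ↥s K ↥(span K s) := by
  refine Module.Basis.mk (v := fun i : ↥s => (⟨(i : V), subset_span i.2⟩ : ↥(span K s))) ?_ ?_
  · apply LinearIndependent.of_comp (span K s).subtype
    have : ((span K s).subtype ∘ fun i : ↥s => (⟨(i : V), subset_span i.2⟩ : ↥(span K s)))
        = ((↑) : ↥s → V) := rfl
    rw [this]
    exact LinearIndepOn.mono (R := K) (v := id) hB.1 hs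
  · have hmap : Submodule.map (span K s).subtype
        (span K (Set.range fun i : ↥s => (⟨(i : V), subset_span i.2⟩ : ↥(span K s)))) =
        Submodule.map (span K s).subtype ⊤ := by
      rw [Submodule.map_span, Submodule.map_top, Submodule.range_subtype]
      rw [← Set.range_comp]
      have : ((span K s).subtype ∘ fun i : ↥s => (⟨(i : V), subset_span i.2⟩ : ↥(span K s)))
          = ((↑) : ↥s → V) := rfl
      rw [this, Subtype.range_coe]
    have := Submodule.map_injective_of_injective (Submodule.injective_subtype (span K s)) hmap
    exact this.ge

lemma basisOfSpan_apply (hB : IsBasisSet K V B) {s : Set V} (hs : s ⊆ B) (i : ↥s) :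
    ((basisOfSpan hB hs i : ↥(span K s)) : V) = (i : V) := by
  simp [basisOfSpan]

lemma quot_rank_adj (hB : IsBasisSet K V B) {s t : Set V} (hs : s ⊆ B) (ht : t ⊆ B) :
    Module.rank K (↥(span K s) ⧸
      Submodule.comap (span K s).subtype (span K s ⊓ span K t)) = #(↥(s \ t)) := by
  set X := span K s with hX
  have hinf : span K s ⊓ span K t = span K (s ∩ t) := (span_inter hB hs ht).symm
  set 𝔟 := basisOfSpan hB hs with h𝔟
  set J : Set ↥s := {i : ↥s | (i : V) ∈ t} with hJ
  have hmap : Submodule.map X.subtype (span K (⇑𝔟 '' J)) = span K (s ∩ t) := by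
    rw [Submodule.map_span]
    congr 1
    ext v
    constructor
    · rintro ⟨w, ⟨i, hi, rfl⟩, rfl⟩
      simp only [Submodule.coe_subtype]
      rw [basisOfSpan_apply hB hs i]
      exact ⟨i.2, hi⟩
    · rintro ⟨hvs, hvt⟩
      refine ⟨𝔟 ⟨v, hvs⟩, ⟨⟨v, hvs⟩, hvt, rfl⟩, ?_⟩
      simp only [Submodule.coe_subtype]
      rw [basisOfSpan_apply hB hs]
  have hcomap : Submodule.comap X.subtype (span K s ⊓ span K t) = span K (⇑𝔟 '' J) := by
    rw [hinf, ← hmap, Submodule.comap_map_eq, Submodule.ker_subtype, sup_bot_eq]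
  rw [hcomap, rank_quotient_span_image 𝔟 J]
  apply Cardinal.mk_congr
  exact {
    toFun := fun x => ⟨((x : ↥s) : V), (x : ↥s).2, x.2⟩
    invFun := fun y => ⟨⟨(y : V), y.2.1⟩, y.2.2⟩
    left_inv := fun x => rfl
    right_inv := fun y => rfl }

lemma mk_eq_one_iff_sing {α : Type w} {s : Set α} : #(↥s) = 1 ↔ ∃ a, s = {a} := by
  constructor
  · intro h
    have hne : Nonempty ↥s := by
      rw [← Cardinal.mk_ne_zero_iff, h]; exact one_ne_zero
    have hsub : Subsingleton ↥s := (Cardinal.eq_one_iff_unique.1 h).1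
    rcases hne with ⟨⟨a, ha⟩⟩
    refine ⟨a, ?_⟩
    ext x
    constructor
    · intro hx
      have := hsub.elim ⟨x, hx⟩ ⟨a, ha⟩
      simpa using congrArg Subtype.val this
    · rintro rfl; exact ha
  · rintro ⟨a, rfl⟩
    simp

lemma adjacent_iff (hB : IsBasisSet K V B) {s t : Set V} (hs : s ⊆ B) (ht : t ⊆ B) :
    AdjacentSub K V (span K s) (span K t) ↔ ((∃ u, s \ t = {u}) ∧ (∃ w, t \ s = {w})) := by
  unfold AdjacentSub
  rw [quot_rank_adj hB hs ht]
  have h2 : Submodule.comap (span K t).subtype (span K s ⊓ span K t)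
      = Submodule.comap (span K t).subtype (span K t ⊓ span K s) := by rw [inf_comm]
  rw [h2, quot_rank_adj hB ht hs, mk_eq_one_iff_sing, mk_eq_one_iff_sing]

/-! ### Component-level combinatorics -/

variable {G C : Set (Submodule K V)} {β : Cardinal.{v}}

lemma C_sub_G (hC : IsConnComponent K V G C) : C ⊆ G := by
  obtain ⟨X₀, _, rfl⟩ := hC
  intro Y hY
  exact hY.1

lemma C_next (hC : IsConnComponent K V G C) {Z Z' : Submodule K V} (hZ : Z ∈ C)
    (hZ' : Z' ∈ G) (hadj : AdjacentSub K V Z Z') : Z' ∈ C := by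
  obtain ⟨X₀, hX₀, rfl⟩ := hC
  exact ⟨hZ', hZ.2.tail ⟨hZ.1, hZ', hadj⟩⟩

lemma mk_swap_set {α : Type w} {s : Set α} {u w : α} (hu : u ∈ s) (hw : w ∉ s) :
    #(↥((s \ {u}) ∪ {w})) = #(↥s) := by
  have h1 : (s \ {u}) ∪ {w} = insert w (s \ {u}) := by
    rw [Set.union_singleton]
  have h2 : s = insert u (s \ {u}) := by
    rw [Set.insert_diff_singleton, Set.insert_eq_self.2 hu]
  rw [h1, Cardinal.mk_insert (fun h => hw h.1)]
  conv_rhs => rw [h2]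
  rw [Cardinal.mk_insert (fun h => h.2 rfl)]

lemma compl_swap {s : Set V} {u w : V} (hsB : s ⊆ B) (hu : u ∈ s) (hw : w ∈ B \ s) :
    B \ ((s \ {u}) ∪ {w}) = ((B \ s) \ {w}) ∪ {u} := by
  have huB : u ∈ B := hsB hu
  have huw : u ≠ w := fun h => hw.2 (h ▸ hu)
  ext x
  by_cases hxu : x = u <;> by_cases hxw : x = w <;>
    simp only [Set.mem_diff, Set.mem_union, Set.mem_singleton_iff] <;>
    subst_vars <;> tauto

lemma G_swap (hG : G = Gsub K V β ∨ G = Gsup K V β) (hB : IsBasisSet K V B)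
    {s : Set V} {u w : V} (hsB : s ⊆ B) (hu : u ∈ s) (hw : w ∈ B \ s)
    (hmem : span K s ∈ G) : span K ((s \ {u}) ∪ {w}) ∈ G := by
  have hs'B : (s \ {u}) ∪ {w} ⊆ B := by
    rintro x (hx | rfl)
    · exact hsB hx.1
    · exact hw.1
  have h1 : Module.rank K ↥(span K ((s \ {u}) ∪ {w})) = Module.rank K ↥(span K s) := by
    rw [rank_span_sub hB hs'B, rank_span_sub hB hsB, mk_swap_set hu hw.2]
  have h2 : Module.rank K (V ⧸ span K ((s \ {u}) ∪ {w})) = Module.rank K (V ⧸ span K s) := by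
    rw [rank_quot_V hB hs'B, rank_quot_V hB hsB, compl_swap hsB hu hw]
    exact mk_swap_set hw (fun h => h.2 hu)
  rcases hG with rfl | rfl
  · exact ⟨by rw [h1]; exact hmem.1, by rw [h2]; exact hmem.2⟩
  · exact ⟨by rw [h1]; exact hmem.1, by rw [h2]; exact hmem.2⟩

lemma adj_swap (hB : IsBasisSet K V B) {s : Set V} {u w : V}
    (hsB : s ⊆ B) (hu : u ∈ s) (hw : w ∈ B \ s) :
    AdjacentSub K V (span K s) (span K ((s \ {u}) ∪ {w})) := by
  have hs'B : (s \ {u}) ∪ {w} ⊆ B := by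
    rintro x (hx | rfl)
    · exact hsB hx.1
    · exact hw.1
  rw [adjacent_iff hB hsB hs'B]
  have huw : u ≠ w := fun h => hw.2 (h ▸ hu)
  have hws : w ∉ s := hw.2
  constructor
  · refine ⟨u, ?_⟩
    ext x
    by_cases hxu : x = u <;> by_cases hxw : x = w <;>
      simp only [Set.mem_diff, Set.mem_union, Set.mem_singleton_iff] <;>
      subst_vars <;> tauto
  · refine ⟨w, ?_⟩
    ext x
    by_cases hxu : x = u <;> by_cases hxw : x = w <;>
      simp only [Set.mem_diff, Set.mem_union, Set.mem_singleton_iff] <;>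
      subst_vars <;> tauto

set_option linter.unusedSectionVars false

lemma swapseq (hG : G = Gsub K V β ∨ G = Gsup K V β) (hB : IsBasisSet K V B)
    (hC : IsConnComponent K V G C) :
    ∀ (n : ℕ) (D A : Finset V) (s : Set V), D.card = n → A.card = n →
      ↑D ⊆ s → s ⊆ B → (↑A : Set V) ⊆ B \ s → span K s ∈ C →
      span K ((s \ ↑D) ∪ ↑A) ∈ C := by
  classical
  intro n
  induction n with
  | zero =>
    intro D A s hD hA _ _ _ hs
    rw [Finset.card_eq_zero] at hD hA
    subst hD; subst hA
    simpa using hs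
  | succ n ih =>
    intro D A s hD hA hDs hsB hAs hs
    obtain ⟨u, hu⟩ := Finset.card_pos.1 (by omega : 0 < D.card)
    obtain ⟨w, hw⟩ := Finset.card_pos.1 (by omega : 0 < A.card)
    have hus : u ∈ s := hDs hu
    have hwBs : w ∈ B \ s := hAs hw
    set s₁ := (s \ {u}) ∪ {w} with hs₁
    have hs₁B : s₁ ⊆ B := by
      rintro x (hx | rfl)
      · exact hsB hx.1
      · exact hwBs.1
    have hs₁C : span K s₁ ∈ C :=
      C_next hC hs (G_swap hG hB hsB hus hwBs (C_sub_G hC hs)) (adj_swap hB hsB hus hwBs)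
    have hfin : ((s₁ \ ↑(D.erase u)) ∪ ↑(A.erase w)) = (s \ ↑D) ∪ ↑A := by
      have huw : u ≠ w := fun h => hwBs.2 (h ▸ hus)
      have hwD : w ∉ D := fun h => hwBs.2 (hDs h)
      have huA : u ∉ A := fun h => (hAs h).2 hus
      ext x
      by_cases hxu : x = u <;> by_cases hxw : x = w <;>
        simp only [hs₁, Set.mem_union, Set.mem_diff, Set.mem_singleton_iff,
          Finset.coe_erase, Finset.mem_coe, Finset.mem_erase] <;>
        subst_vars <;> tauto
    have := ih (D.erase u) (A.erase w) s₁
      (by rw [Finset.card_erase_of_mem hu, hD]; rfl)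
      (by rw [Finset.card_erase_of_mem hw, hA]; rfl)
      (by
        intro x hx
        rw [Finset.coe_erase] at hx
        have hxD : x ∈ D := hx.1
        have hxu : x ≠ u := hx.2
        exact Or.inl ⟨hDs hxD, hxu⟩)
      hs₁B
      (by
        intro x hx
        rw [Finset.coe_erase] at hx
        have hxA : x ∈ A := hx.1
        have hxw : x ≠ w := hx.2
        have hxBs := hAs hxA
        refine ⟨hxBs.1, ?_⟩
        rintro (hx' | hx')
        · exact hxBs.2 hx'.1
        · exact hxw hx')
      hs₁C
    rwa [hfin] at this

lemma support_infinite (hα : Cardinal.aleph0 ≤ Module.rank K V) (hβinf : Cardinal.aleph0 ≤ β)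
    (hG : G = Gsub K V β ∨ G = Gsup K V β) (hB : IsBasisSet K V B)
    {s : Set V} (hs : s ⊆ B) (hmem : span K s ∈ G) : s.Infinite ∧ (B \ s).Infinite := by
  have h1 : ℵ₀ ≤ #(↥s) := by
    rcases hG with rfl | rfl
    · rw [← rank_span_sub hB hs]; rw [hmem.1]; exact hβinf
    · rw [← rank_span_sub hB hs]; rw [hmem.1]; exact hα
  have h2 : ℵ₀ ≤ #(↥(B \ s)) := by
    rcases hG with rfl | rfl
    · rw [← rank_quot_V hB hs]; rw [hmem.2]; exact hα
    · rw [← rank_quot_V hB hs]; rw [hmem.2]; exact hβinf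
  exact ⟨Set.infinite_coe_iff.1 (Cardinal.infinite_iff.2 h1),
    Set.infinite_coe_iff.1 (Cardinal.infinite_iff.2 h2)⟩

lemma exists_elem (hα : Cardinal.aleph0 ≤ Module.rank K V) (hβinf : Cardinal.aleph0 ≤ β)
    (hG : G = Gsub K V β ∨ G = Gsup K V β) (hB : IsBasisSet K V B)
    (hC : IsConnComponent K V G C)
    {X : Submodule K V} (hX : X ∈ apartmentOf K V G B ∩ C) (ins outs : Finset V)
    (hins : ↑ins ⊆ B) (houts : ↑outs ⊆ B) (hdisj : Disjoint ins outs) :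
    ∃ s, s ⊆ B ∧ span K s ∈ apartmentOf K V G B ∩ C ∧
      (∀ v ∈ ins, v ∈ s) ∧ (∀ v ∈ outs, v ∉ s) := by
  classical
  obtain ⟨⟨hXG, s₀, hs₀B, hXeq⟩, hXC⟩ := hX
  subst hXeq
  obtain ⟨hs₀inf, hcinf⟩ := support_infinite hα hβinf hG hB hs₀B hXG
  set D₀ : Finset V := outs.filter (fun v => v ∈ s₀) with hD₀
  set A₀ : Finset V := ins.filter (fun v => v ∉ s₀) with hA₀
  set p := D₀.card
  set q := A₀.card
  obtain ⟨E, hE, hEcard⟩ :=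
    ((hs₀inf.diff ((ins.finite_toSet).union (outs.finite_toSet)))).exists_subset_card_eq (q - p)
  obtain ⟨F, hF, hFcard⟩ :=
    ((hcinf.diff ((ins.finite_toSet).union (outs.finite_toSet)))).exists_subset_card_eq (p - q)
  set D := D₀ ∪ E with hD
  set A := A₀ ∪ F with hA
  have hDdisj : Disjoint D₀ E := by
    rw [Finset.disjoint_left]
    intro x hx hxE
    exact (hE hxE).2 (Or.inr (Finset.mem_filter.1 hx).1)
  have hAdisj : Disjoint A₀ F := by
    rw [Finset.disjoint_left]
    intro x hx hxF
    exact (hF hxF).2 (Or.inl (Finset.mem_filter.1 hx).1)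
  have hcards : D.card = A.card := by
    rw [hD, hA, Finset.card_union_of_disjoint hDdisj, Finset.card_union_of_disjoint hAdisj,
      hEcard, hFcard]
    omega
  have hDs : (↑D : Set V) ⊆ s₀ := by
    intro x hx
    rcases Finset.mem_union.1 hx with hx | hx
    · exact (Finset.mem_filter.1 hx).2
    · exact (hE hx).1
  have hAs : (↑A : Set V) ⊆ B \ s₀ := by
    intro x hx
    rcases Finset.mem_union.1 hx with hx | hx
    · exact ⟨hins (Finset.mem_filter.1 hx).1, (Finset.mem_filter.1 hx).2⟩
    · exact (hF hx).1
  set s : Set V := (s₀ \ ↑D) ∪ ↑A with hseq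
  have hsB : s ⊆ B := by
    rintro x (hx | hx)
    · exact hs₀B hx.1
    · exact (hAs hx).1
  have hsC : span K s ∈ C :=
    swapseq hG hB hC D.card D A s₀ rfl hcards.symm hDs hs₀B hAs hXC
  refine ⟨s, hsB, ⟨⟨C_sub_G hC hsC, s, hsB, rfl⟩, hsC⟩, ?_, ?_⟩
  · intro v hv
    by_cases hvs : v ∈ s₀
    · left
      refine ⟨hvs, ?_⟩
      intro hvD
      rcases Finset.mem_union.1 hvD with h | h
      · exact (Finset.disjoint_left.1 hdisj hv) (Finset.mem_filter.1 h).1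
      · exact (hE h).2 (Or.inl hv)
    · right
      exact Finset.mem_union.2 (Or.inl (Finset.mem_filter.2 ⟨hv, hvs⟩))
  · intro v hv hvs
    rcases hvs with hvs | hvs
    · exact hvs.2 (Finset.mem_union.2 (Or.inl (Finset.mem_filter.2 ⟨hv, hvs.1⟩)))
    · rcases Finset.mem_union.1 hvs with h | h
      · exact (Finset.disjoint_left.1 hdisj (Finset.mem_filter.1 h).1) hv
      · exact (hF h).2 (Or.inr hv)

/-! ### Closed subsets of an apartment of a component -/

def Cl (G P 𝒮 : Set (Submodule K V)) : Prop :=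
  𝒮.Nonempty ∧ ∃ B₂ : Set V, IsBasisSet K V B₂ ∧ 𝒮 = P ∩ apartmentOf K V G B₂

def MaxCl (G P M : Set (Submodule K V)) : Prop :=
  Cl G P M ∧ M ⊂ P ∧ ∀ 𝒯, Cl G P 𝒯 → M ⊆ 𝒯 → 𝒯 = M ∨ 𝒯 = P

def Polar (G P M M' : Set (Submodule K V)) : Prop :=
  MaxCl G P M ∧ MaxCl G P M' ∧ M ∪ M' = P ∧
    ∀ M'', MaxCl G P M'' → M ∩ M' ⊆ M'' → M'' = M ∨ M'' = M'

def PhiProp (G P : Set (Submodule K V)) (X Y : Submodule K V) : Prop :=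
  ∃! p : Set (Submodule K V) × Set (Submodule K V),
    Polar G P p.1 p.2 ∧ X ∉ p.1 ∧ Y ∉ p.2

def Mset (P : Set (Submodule K V)) (b b' : V) : Set (Submodule K V) :=
  {Z | Z ∈ P ∧ (b ∈ Z → b' ∈ Z)}

lemma canon_supp_eq (hB : IsBasisSet K V B) {s : Set V} (hs : s ⊆ B) :
    B ∩ ((span K s : Submodule K V) : Set V) = s := by
  ext x
  constructor
  · rintro ⟨hxB, hxs⟩
    exact (basis_mem_span_iff hB hs hxB).1 hxs
  · intro hx
    exact ⟨hs hx, subset_span hx⟩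

lemma canon_supp_span (hB : IsBasisSet K V B) {Z : Submodule K V}
    (h : ∃ s ⊆ B, Z = span K s) : span K (B ∩ (Z : Set V)) = Z := by
  obtain ⟨s, hs, rfl⟩ := h
  rw [canon_supp_eq hB hs]

lemma mem_iff_supp (hB : IsBasisSet K V B) {s : Set V} (hs : s ⊆ B) {v : V} (hv : v ∈ B) :
    v ∈ span K s ↔ v ∈ s := basis_mem_span_iff hB hs hv

lemma basis_insert_op (hB : IsBasisSet K V B) {b b' : V} (hb : b ∈ B) (hb' : b' ∈ B)
    (hne : b ≠ b') : IsBasisSet K V (insert (b + b') (B \ {b})) := by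
  have hBdiff : B \ {b} ⊆ B := Set.diff_subset
  have hb'mem : b' ∈ B \ {b} := ⟨hb', fun h => hne (Set.mem_singleton_iff.1 h).symm⟩
  have hnotin : b + b' ∉ span K (B \ {b}) := by
    intro hmem
    have hb'span : b' ∈ span K (B \ {b}) := subset_span hb'mem
    have hbspan : b ∈ span K (B \ {b}) := by
      have h2 : (b + b') - b' ∈ span K (B \ {b}) := Submodule.sub_mem _ hmem hb'span
      simpa using h2
    exact ((basis_mem_span_iff hB hBdiff hb).1 hbspan).2 rfl
  refine ⟨(LinearIndepOn.mono (R := K) (v := id) hB.1 hBdiff).id_insert hnotin, ?_⟩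
  rw [eq_top_iff, ← hB.2]
  refine Submodule.span_le.2 ?_
  intro x hx
  by_cases hxb : x = b
  · subst hxb
    have h1 : x + b' ∈ span K (insert (x + b') (B \ {x})) := subset_span (Set.mem_insert _ _)
    have h2 : b' ∈ span K (insert (x + b') (B \ {x})) :=
      subset_span (Set.mem_insert_of_mem _ hb'mem)
    have h3 := Submodule.sub_mem _ h1 h2
    simpa using h3
  · exact subset_span (Set.mem_insert_of_mem _ ⟨hx, hxb⟩)

def Pa (G C : Set (Submodule K V)) (B : Set V) : Set (Submodule K V) :=
  apartmentOf K V G B ∩ C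

lemma Pa_apartment {Z : Submodule K V} (hZ : Z ∈ Pa G C B) : ∃ s ⊆ B, Z = span K s :=
  hZ.1.2

lemma Mset_subset {b b' : V} : Mset (Pa G C B) b b' ⊆ Pa G C B := fun _ h => h.1

lemma Mset_closed (hα : Cardinal.aleph0 ≤ Module.rank K V) (hβinf : Cardinal.aleph0 ≤ β)
    (hG : G = Gsub K V β ∨ G = Gsup K V β) (hB : IsBasisSet K V B)
    (hC : IsConnComponent K V G C) (hPne : (Pa G C B).Nonempty)
    {b b' : V} (hb : b ∈ B) (hb' : b' ∈ B) (hne : b ≠ b') :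
    Cl G (Pa G C B) (Mset (Pa G C B) b b') := by
  classical
  obtain ⟨X, hX⟩ := hPne
  constructor
  · -- nonempty
    obtain ⟨s, hsB, hsPC, _, houts⟩ := exists_elem hα hβinf hG hB hC hX ∅ {b}
      (by simp) (by simpa using hb) (by simp)
    refine ⟨span K s, hsPC, ?_⟩
    intro hbmem
    exact absurd ((mem_iff_supp hB hsB hb).1 hbmem) (houts b (Finset.mem_singleton_self b))
  · refine ⟨insert (b + b') (B \ {b}), basis_insert_op hB hb hb' hne, ?_⟩
    ext Z
    constructor
    · rintro ⟨hZP, himp⟩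
      refine ⟨hZP, ?_⟩
      obtain ⟨s, hsB, rfl⟩ := Pa_apartment hZP
      refine ⟨hZP.1.1, ?_⟩
      by_cases hbs : b ∈ s
      · have hb's : b' ∈ s :=
          (mem_iff_supp hB hsB hb').1 (himp (subset_span hbs))
        refine ⟨insert (b + b') (s \ {b}), ?_, ?_⟩
        · intro x hx
          rcases Set.mem_insert_iff.1 hx with rfl | hx
          · exact Set.mem_insert _ _
          · exact Set.mem_insert_of_mem _ ⟨hsB hx.1, hx.2⟩
        · apply le_antisymm
          · refine Submodule.span_le.2 ?_
            intro x hx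
            by_cases hxb : x = b
            · subst hxb
              have h1 : x + b' ∈ span K (insert (x + b') (s \ {x})) :=
                subset_span (Set.mem_insert _ _)
              have h2 : b' ∈ span K (insert (x + b') (s \ {x})) :=
                subset_span (Set.mem_insert_of_mem _ ⟨hb's, fun h => hne (Set.mem_singleton_iff.1 h).symm⟩)
              have h3 := Submodule.sub_mem _ h1 h2
              simpa using h3
            · exact subset_span (Set.mem_insert_of_mem _ ⟨hx, hxb⟩)
          · refine Submodule.span_le.2 ?_
            intro x hx
            rcases Set.mem_insert_iff.1 hx with rfl | hx
            · exact Submodule.add_mem _ (subset_span hbs) (subset_span hb's)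
            · exact subset_span hx.1
      · exact ⟨s, fun x hx => Set.mem_insert_of_mem _ ⟨hsB hx, fun h => hbs ((Set.mem_singleton_iff.1 h) ▸ hx)⟩, rfl⟩
    · rintro ⟨hZP, hZ2⟩
      refine ⟨hZP, ?_⟩
      intro hbZ
      by_contra hb'Z
      obtain ⟨s, hsB, hZeq⟩ := Pa_apartment hZP
      obtain ⟨-, w, hwB2, hZeq2⟩ := hZ2
      by_cases hsum : b + b' ∈ Z
      · have : b' ∈ Z := by
          have h3 := Z.sub_mem hsum hbZ
          simpa using h3
        exact hb'Z this
      · have hwB : w ⊆ B \ {b} := by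
          intro x hx
          rcases Set.mem_insert_iff.1 (hwB2 hx) with rfl | hx'
          · exact absurd (hZeq2 ▸ subset_span hx : b + b' ∈ Z) hsum
          · exact hx'
        have : b ∈ w := by
          have := hZeq2 ▸ hbZ
          exact (mem_iff_supp hB (hwB.trans Set.diff_subset) hb).1 this
        exact (hwB this).2 rfl

lemma Mset_proper (hα : Cardinal.aleph0 ≤ Module.rank K V) (hβinf : Cardinal.aleph0 ≤ β)
    (hG : G = Gsub K V β ∨ G = Gsup K V β) (hB : IsBasisSet K V B)
    (hC : IsConnComponent K V G C) (hPne : (Pa G C B).Nonempty)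
    {b b' : V} (hb : b ∈ B) (hb' : b' ∈ B) (hne : b ≠ b') :
    ∃ Z ∈ Pa G C B, b ∈ Z ∧ b' ∉ Z := by
  classical
  obtain ⟨X, hX⟩ := hPne
  obtain ⟨s, hsB, hsPC, hins, houts⟩ := exists_elem hα hβinf hG hB hC hX {b} {b'}
    (by simpa using hb) (by simpa using hb') (by simpa using hne)
  refine ⟨span K s, hsPC, ?_, ?_⟩
  · exact subset_span (hins b (Finset.mem_singleton_self b))
  · intro h
    exact houts b' (Finset.mem_singleton_self b') ((mem_iff_supp hB hsB hb').1 h)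

/-- The classification engine: a closed subset admitting, for every ordered pair of distinct
basis vectors, a member containing the first but not the second, must be the whole apartment. -/
lemma cl_full (hα : Cardinal.aleph0 ≤ Module.rank K V) (hβinf : Cardinal.aleph0 ≤ β)
    (hG : G = Gsub K V β ∨ G = Gsup K V β) (hB : IsBasisSet K V B)
    (hC : IsConnComponent K V G C) {𝒮 : Set (Submodule K V)}
    (hcl : Cl G (Pa G C B) 𝒮)
    (hwit : ∀ b ∈ B, ∀ b' ∈ B, b ≠ b' → ∃ Z ∈ 𝒮, b ∈ Z ∧ b' ∉ Z) :
    𝒮 = Pa G C B := by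
  classical
  obtain ⟨hne, B₂, hB₂, h𝒮⟩ := hcl
  rw [h𝒮]
  refine Set.Subset.antisymm Set.inter_subset_left ?_
  intro Z₀ hZ₀
  refine ⟨hZ₀, ?_⟩
  obtain ⟨s', hs'B, hZeq⟩ := Pa_apartment hZ₀
  have hZG : Z₀ ∈ G := hZ₀.1.1
  have hcompl : (B \ s').Infinite :=
    (support_infinite hα hβinf hG hB hs'B (hZeq ▸ hZG)).2
  have hBne : (B \ s').Nonempty := hcompl.nonempty
  have hch : ∀ (b' : ↥(B \ s')) (b : ↥s'), ∃ Z,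
      (Z ∈ Pa G C B ∩ apartmentOf K V G B₂) ∧ (b : V) ∈ Z ∧ (b' : V) ∉ Z := by
    rintro ⟨b', hb'⟩ ⟨b, hbs⟩
    have hbB : b ∈ B := hs'B hbs
    have hne' : b ≠ b' := fun h => hb'.2 (h ▸ hbs)
    obtain ⟨Z, hZ𝒮, hbZ, hb'Z⟩ := hwit b hbB b' hb'.1 hne'
    exact ⟨Z, h𝒮 ▸ hZ𝒮, hbZ, hb'Z⟩
  choose Zf hZf hZfb hZfb' using hch
  have hZfP : ∀ b' b, Zf b' b ∈ Pa G C B := fun b' b => (hZf b' b).1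
  have hZfA2 : ∀ b' b, Zf b' b ∈ apartmentOf K V G B₂ := fun b' b => (hZf b' b).2
  set U : ↥(B \ s') → Set V := fun b' => ⋃ b : ↥s', (B ∩ (Zf b' b : Set V)) with hU
  set U₂ : ↥(B \ s') → Set V := fun b' => ⋃ b : ↥s', (B₂ ∩ (Zf b' b : Set V)) with hU₂
  have hUB : ∀ b', U b' ⊆ B := fun b' => Set.iUnion_subset fun b => Set.inter_subset_left
  have hU₂B : ∀ b', U₂ b' ⊆ B₂ := fun b' => Set.iUnion_subset fun b => Set.inter_subset_left
  have hspan_eq : ∀ b', span K (U b') = span K (U₂ b') := by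
    intro b'
    rw [hU, hU₂, Submodule.span_iUnion, Submodule.span_iUnion]
    congr 1
    funext b
    rw [canon_supp_span hB (Pa_apartment (hZfP b' b)),
      canon_supp_span hB₂ (hZfA2 b' b).2]
  have hinter : (⋂ b', U b') = s' := by
    ext x
    constructor
    · intro hx
      have hxB : x ∈ B := hUB ⟨_, hBne.choose_spec⟩ (Set.mem_iInter.1 hx _)
      by_contra hxs
      have hxj : x ∈ U ⟨x, hxB, hxs⟩ := Set.mem_iInter.1 hx _
      obtain ⟨b, hb⟩ := Set.mem_iUnion.1 hxj
      exact hZfb' ⟨x, hxB, hxs⟩ b hb.2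
    · intro hxs
      refine Set.mem_iInter.2 fun b' => ?_
      exact Set.mem_iUnion.2 ⟨⟨x, hxs⟩, ⟨hs'B hxs, hZfb b' ⟨x, hxs⟩⟩⟩
  have hZ0span : Z₀ = span K (⋂ b', U₂ b') := by
    have h1 : Z₀ = span K (⋂ b', U b') := by rw [hinter, hZeq]
    rw [h1, span_iInter hB U hUB, span_iInter hB₂ U₂ hU₂B]
    exact iInf_congr hspan_eq
  have : Nonempty ↥(B \ s') := hBne.to_subtype
  refine ⟨hZG, ⋂ b', U₂ b', ?_, hZ0span⟩
  exact (Set.iInter_subset _ this.some).trans (hU₂B _)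

lemma Cl_subset {P 𝒮 : Set (Submodule K V)} (h : Cl G P 𝒮) : 𝒮 ⊆ P := by
  obtain ⟨-, B₂, -, rfl⟩ := h
  exact Set.inter_subset_left

lemma exists_elemZ (hα : Cardinal.aleph0 ≤ Module.rank K V) (hβinf : Cardinal.aleph0 ≤ β)
    (hG : G = Gsub K V β ∨ G = Gsup K V β) (hB : IsBasisSet K V B)
    (hC : IsConnComponent K V G C) (hPne : (Pa G C B).Nonempty)
    (ins outs : Finset V) (hins : ↑ins ⊆ B) (houts : ↑outs ⊆ B) (hdisj : Disjoint ins outs) :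
    ∃ Z ∈ Pa G C B, (∀ v ∈ ins, v ∈ Z) ∧ (∀ v ∈ outs, v ∉ Z) := by
  obtain ⟨X, hX⟩ := hPne
  obtain ⟨s, hsB, hsPC, hi, ho⟩ := exists_elem hα hβinf hG hB hC hX ins outs hins houts hdisj
  refine ⟨span K s, hsPC, fun v hv => subset_span (hi v hv), fun v hv hmem => ?_⟩
  exact ho v hv ((mem_iff_supp hB hsB (houts hv)).1 hmem)

lemma Mset_max (hα : Cardinal.aleph0 ≤ Module.rank K V) (hβinf : Cardinal.aleph0 ≤ β)
    (hG : G = Gsub K V β ∨ G = Gsup K V β) (hB : IsBasisSet K V B)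
    (hC : IsConnComponent K V G C) (hPne : (Pa G C B).Nonempty)
    {b b' : V} (hb : b ∈ B) (hb' : b' ∈ B) (hne : b ≠ b') :
    MaxCl G (Pa G C B) (Mset (Pa G C B) b b') := by
  classical
  refine ⟨Mset_closed hα hβinf hG hB hC hPne hb hb' hne, ?_, ?_⟩
  · rw [Set.ssubset_iff_subset_ne]
    refine ⟨Mset_subset, ?_⟩
    obtain ⟨Z, hZP, hbZ, hb'Z⟩ := Mset_proper hα hβinf hG hB hC hPne hb hb' hne
    intro h
    rw [← h] at hZP
    exact hb'Z (hZP.2 hbZ)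
  · intro 𝒯 h𝒯cl hsub
    by_cases h : 𝒯 = Mset (Pa G C B) b b'
    · exact Or.inl h
    · right
      obtain ⟨Z₀, hZ₀𝒯, hZ₀M⟩ := Set.exists_of_ssubset (hsub.ssubset_of_ne (Ne.symm h))
      have hZ₀P : Z₀ ∈ Pa G C B := Cl_subset h𝒯cl hZ₀𝒯
      have hZ₀b : b ∈ Z₀ ∧ b' ∉ Z₀ := by
        by_contra hcon
        apply hZ₀M
        refine ⟨hZ₀P, fun hbZ => ?_⟩
        by_contra hb'Z
        exact hcon ⟨hbZ, hb'Z⟩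
      apply cl_full hα hβinf hG hB hC h𝒯cl
      intro c hcB c' hc'B hnecc
      by_cases hcb : c = b ∧ c' = b'
      · exact ⟨Z₀, hZ₀𝒯, hcb.1 ▸ hZ₀b.1, hcb.2 ▸ hZ₀b.2⟩
      · by_cases hcbb : c = b
        · subst hcbb
          have hc'b' : c' ≠ b' := fun hh => hcb ⟨rfl, hh⟩
          obtain ⟨Z, hZP, hi, ho⟩ := exists_elemZ hα hβinf hG hB hC hPne {c, b'} {c'}
            (by intro x hx; rcases Finset.mem_insert.1 hx with rfl | hx
                · exact hcB
                · rw [Finset.mem_singleton.1 hx]; exact hb')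
            (by simp only [Finset.coe_singleton, Set.singleton_subset_iff]; exact hc'B)
            (by rw [Finset.disjoint_singleton_right, Finset.mem_insert, Finset.mem_singleton]
                push_neg
                exact ⟨Ne.symm hnecc, hc'b'⟩)
          have hZM : Z ∈ Mset (Pa G C B) c b' := ⟨hZP, fun _ => hi b' (by simp)⟩
          exact ⟨Z, hsub hZM, hi c (by simp), ho c' (by simp)⟩
        · obtain ⟨Z, hZP, hi, ho⟩ := exists_elemZ hα hβinf hG hB hC hPne {c} {b, c'}
            (by simp only [Finset.coe_singleton, Set.singleton_subset_iff]; exact hcB)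
            (by intro x hx; rcases Finset.mem_insert.1 hx with rfl | hx
                · exact hb
                · rw [Finset.mem_singleton.1 hx]; exact hc'B)
            (by rw [Finset.disjoint_left]
                intro x hx
                rw [Finset.mem_singleton.1 hx]
                rw [Finset.mem_insert, Finset.mem_singleton]
                push_neg
                exact ⟨hcbb, hnecc⟩)
          have hZM : Z ∈ Mset (Pa G C B) b b' := ⟨hZP, fun hbZ => absurd hbZ (ho b (by simp))⟩
          exact ⟨Z, hsub hZM, hi c (by simp), ho c' (by simp)⟩

lemma max_eq_Mset (hα : Cardinal.aleph0 ≤ Module.rank K V) (hβinf : Cardinal.aleph0 ≤ β)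
    (hG : G = Gsub K V β ∨ G = Gsup K V β) (hB : IsBasisSet K V B)
    (hC : IsConnComponent K V G C) (hPne : (Pa G C B).Nonempty)
    {M : Set (Submodule K V)} (hM : MaxCl G (Pa G C B) M) :
    ∃ b ∈ B, ∃ b' ∈ B, b ≠ b' ∧ M = Mset (Pa G C B) b b' := by
  classical
  have hnot : ¬ ∀ b ∈ B, ∀ b' ∈ B, b ≠ b' → ∃ Z ∈ M, b ∈ Z ∧ b' ∉ Z := by
    intro h
    exact hM.2.1.ne (cl_full hα hβinf hG hB hC hM.1 h)
  push_neg at hnot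
  obtain ⟨b, hbB, b', hb'B, hne, hall⟩ := hnot
  have hsub : M ⊆ Mset (Pa G C B) b b' := by
    intro Z hZ
    exact ⟨Cl_subset hM.1 hZ, fun hbZ => hall Z hZ hbZ⟩
  rcases hM.2.2 _ (Mset_closed hα hβinf hG hB hC hPne hbB hb'B hne) hsub with h | h
  · exact ⟨b, hbB, b', hb'B, hne, h.symm⟩
  · exfalso
    obtain ⟨Z, hZP, hbZ, hb'Z⟩ := Mset_proper hα hβinf hG hB hC hPne hbB hb'B hne
    have : Z ∈ Mset (Pa G C B) b b' := h.symm ▸ hZP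
    exact hb'Z (this.2 hbZ)

lemma Mset_inj (hα : Cardinal.aleph0 ≤ Module.rank K V) (hβinf : Cardinal.aleph0 ≤ β)
    (hG : G = Gsub K V β ∨ G = Gsup K V β) (hB : IsBasisSet K V B)
    (hC : IsConnComponent K V G C) (hPne : (Pa G C B).Nonempty)
    {b b' c c' : V} (hb : b ∈ B) (hb' : b' ∈ B) (hc : c ∈ B) (hc' : c' ∈ B)
    (hne : b ≠ b') (hne' : c ≠ c')
    (heq : Mset (Pa G C B) b b' = Mset (Pa G C B) c c') : b = c ∧ b' = c' := by
  classical
  by_contra hn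
  have hwit : ∃ Z ∈ Mset (Pa G C B) b b', c ∈ Z ∧ c' ∉ Z := by
    by_cases hbc : b = c
    · subst hbc
      have hb'c' : b' ≠ c' := by
        intro hh
        exact hn ⟨rfl, hh⟩
      obtain ⟨Z, hZP, hi, ho⟩ := exists_elemZ hα hβinf hG hB hC hPne {b, b'} {c'}
        (by intro x hx; rcases Finset.mem_insert.1 hx with rfl | hx
            · exact hb
            · rw [Finset.mem_singleton.1 hx]; exact hb')
        (by simp only [Finset.coe_singleton, Set.singleton_subset_iff]; exact hc')
        (by rw [Finset.disjoint_singleton_right, Finset.mem_insert, Finset.mem_singleton]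
            push_neg
            exact ⟨Ne.symm hne', Ne.symm hb'c'⟩)
      exact ⟨Z, ⟨hZP, fun _ => hi b' (by simp)⟩, hi b (by simp), ho c' (by simp)⟩
    · obtain ⟨Z, hZP, hi, ho⟩ := exists_elemZ hα hβinf hG hB hC hPne {c} {b, c'}
        (by simp only [Finset.coe_singleton, Set.singleton_subset_iff]; exact hc)
        (by intro x hx; rcases Finset.mem_insert.1 hx with rfl | hx
            · exact hb
            · rw [Finset.mem_singleton.1 hx]; exact hc')
        (by rw [Finset.disjoint_left]
            intro x hx
            rw [Finset.mem_singleton.1 hx]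
            rw [Finset.mem_insert, Finset.mem_singleton]
            push_neg
            exact ⟨fun hh => hbc hh.symm, hne'⟩)
      exact ⟨Z, ⟨hZP, fun hbZ => absurd hbZ (ho b (by simp))⟩, hi c (by simp), ho c' (by simp)⟩
  obtain ⟨Z, hZM, hcZ, hc'Z⟩ := hwit
  have : Z ∈ Mset (Pa G C B) c c' := heq ▸ hZM
  exact hc'Z (this.2 hcZ)

lemma Mset_union_full {b b' c c' : V} (h : b = c' ∨ b' = c) :
    Mset (Pa G C B) b b' ∪ Mset (Pa G C B) c c' = Pa G C B := by
  classical
  refine Set.Subset.antisymm (Set.union_subset Mset_subset Mset_subset) ?_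
  intro Z hZ
  by_cases h1 : b ∈ Z → b' ∈ Z
  · exact Or.inl ⟨hZ, h1⟩
  · push_neg at h1
    refine Or.inr ⟨hZ, fun hcZ => ?_⟩
    rcases h with rfl | rfl
    · exact h1.1
    · exact absurd hcZ h1.2

lemma Mset_union_cases (hα : Cardinal.aleph0 ≤ Module.rank K V) (hβinf : Cardinal.aleph0 ≤ β)
    (hG : G = Gsub K V β ∨ G = Gsup K V β) (hB : IsBasisSet K V B)
    (hC : IsConnComponent K V G C) (hPne : (Pa G C B).Nonempty)
    {b b' c c' : V} (hb : b ∈ B) (hb' : b' ∈ B) (hc : c ∈ B) (hc' : c' ∈ B)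
    (hne : b ≠ b') (hne' : c ≠ c')
    (h : Mset (Pa G C B) b b' ∪ Mset (Pa G C B) c c' = Pa G C B) :
    b = c' ∨ b' = c := by
  classical
  by_contra hcon
  push_neg at hcon
  obtain ⟨Z, hZP, hi, ho⟩ := exists_elemZ hα hβinf hG hB hC hPne {b, c} {b', c'}
    (by intro x hx; rcases Finset.mem_insert.1 hx with rfl | hx
        · exact hb
        · rw [Finset.mem_singleton.1 hx]; exact hc)
    (by intro x hx; rcases Finset.mem_insert.1 hx with rfl | hx
        · exact hb'
        · rw [Finset.mem_singleton.1 hx]; exact hc')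
    (by rw [Finset.disjoint_left]
        intro x hx
        rcases Finset.mem_insert.1 hx with rfl | hx
        · rw [Finset.mem_insert, Finset.mem_singleton]
          push_neg
          exact ⟨hne, hcon.1⟩
        · rw [Finset.mem_singleton.1 hx]
          rw [Finset.mem_insert, Finset.mem_singleton]
          push_neg
          exact ⟨fun hh => hcon.2 hh.symm, hne'⟩)
  have hZun : Z ∈ Mset (Pa G C B) b b' ∪ Mset (Pa G C B) c c' := h.symm ▸ hZP
  rcases hZun with hZ | hZ
  · exact ho b' (by simp) (hZ.2 (hi b (by simp)))
  · exact ho c' (by simp) (hZ.2 (hi c (by simp)))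

lemma polar_of (hα : Cardinal.aleph0 ≤ Module.rank K V) (hβinf : Cardinal.aleph0 ≤ β)
    (hG : G = Gsub K V β ∨ G = Gsup K V β) (hB : IsBasisSet K V B)
    (hC : IsConnComponent K V G C) (hPne : (Pa G C B).Nonempty)
    {b b' : V} (hb : b ∈ B) (hb' : b' ∈ B) (hne : b ≠ b') :
    Polar G (Pa G C B) (Mset (Pa G C B) b b') (Mset (Pa G C B) b' b) := by
  classical
  refine ⟨Mset_max hα hβinf hG hB hC hPne hb hb' hne,
    Mset_max hα hβinf hG hB hC hPne hb' hb hne.symm,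
    Mset_union_full (Or.inl rfl), ?_⟩
  intro M'' hM'' hsub
  obtain ⟨c, hcB, c', hc'B, hnecc, rfl⟩ := max_eq_Mset hα hβinf hG hB hC hPne hM''
  have key : (c = b ∧ c' = b') ∨ (c = b' ∧ c' = b) := by
    by_contra hcon
    push_neg at hcon
    have hwit : ∃ Z ∈ Mset (Pa G C B) b b' ∩ Mset (Pa G C B) b' b, c ∈ Z ∧ c' ∉ Z := by
      by_cases hcbb : c = b ∨ c = b'
      · -- c ∈ {b, b'}; then c' ∉ {b, b'}
        have hc'b : c' ≠ b := by
          intro h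
          rcases hcbb with h2 | h2
          · exact hnecc (h2.trans h.symm)
          · exact hcon.2 h2 h
        have hc'b' : c' ≠ b' := by
          intro h
          rcases hcbb with h2 | h2
          · exact hcon.1 h2 h
          · exact hnecc (h2.trans h.symm)
        obtain ⟨Z, hZP, hi, ho⟩ := exists_elemZ hα hβinf hG hB hC hPne {b, b'} {c'}
          (by intro x hx; rcases Finset.mem_insert.1 hx with rfl | hx
              · exact hb
              · rw [Finset.mem_singleton.1 hx]; exact hb')
          (by simp only [Finset.coe_singleton, Set.singleton_subset_iff]; exact hc'B)
          (by rw [Finset.disjoint_singleton_right, Finset.mem_insert, Finset.mem_singleton]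
              push_neg
              exact ⟨hc'b, hc'b'⟩)
        refine ⟨Z, ⟨⟨hZP, fun _ => hi b' (by simp)⟩, ⟨hZP, fun _ => hi b (by simp)⟩⟩, ?_, ho c' (by simp)⟩
        rcases hcbb with h2 | h2
        · rw [h2]; exact hi b (by simp)
        · rw [h2]; exact hi b' (by simp)
      · push_neg at hcbb
        obtain ⟨Z, hZP, hi, ho⟩ := exists_elemZ hα hβinf hG hB hC hPne {c} {b, b', c'}
          (by simp only [Finset.coe_singleton, Set.singleton_subset_iff]; exact hcB)
          (by intro x hx
              rcases Finset.mem_insert.1 hx with rfl | hx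
              · exact hb
              · rcases Finset.mem_insert.1 hx with rfl | hx
                · exact hb'
                · rw [Finset.mem_singleton.1 hx]; exact hc'B)
          (by rw [Finset.disjoint_left]
              intro x hx
              rw [Finset.mem_singleton.1 hx]
              rw [Finset.mem_insert, Finset.mem_insert, Finset.mem_singleton]
              push_neg
              exact ⟨hcbb.1, hcbb.2, hnecc⟩)
        have h1 : Z ∈ Mset (Pa G C B) b b' := ⟨hZP, fun hbZ => absurd hbZ (ho b (by simp))⟩
        have h2 : Z ∈ Mset (Pa G C B) b' b := ⟨hZP, fun hbZ => absurd hbZ (ho b' (by simp))⟩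
        exact ⟨Z, ⟨h1, h2⟩, hi c (by simp), ho c' (by simp)⟩
    obtain ⟨Z, hZint, hcZ, hc'Z⟩ := hwit
    exact hc'Z ((hsub hZint).2 hcZ)
  rcases key with ⟨rfl, rfl⟩ | ⟨rfl, rfl⟩
  · exact Or.inl rfl
  · exact Or.inr rfl

lemma polar_eq (hα : Cardinal.aleph0 ≤ Module.rank K V) (hβinf : Cardinal.aleph0 ≤ β)
    (hG : G = Gsub K V β ∨ G = Gsup K V β) (hB : IsBasisSet K V B)
    (hC : IsConnComponent K V G C) (hPne : (Pa G C B).Nonempty)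
    {M M' : Set (Submodule K V)} (hpol : Polar G (Pa G C B) M M') :
    ∃ b ∈ B, ∃ b' ∈ B, b ≠ b' ∧ M = Mset (Pa G C B) b b' ∧
      M' = Mset (Pa G C B) b' b := by
  classical
  obtain ⟨b, hbB, b', hb'B, hne, rfl⟩ := max_eq_Mset hα hβinf hG hB hC hPne hpol.1
  obtain ⟨c, hcB, c', hc'B, hne', rfl⟩ := max_eq_Mset hα hβinf hG hB hC hPne hpol.2.1
  have hun := Mset_union_cases hα hβinf hG hB hC hPne hbB hb'B hcB hc'B hne hne' hpol.2.2.1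
  have key : b = c' ∧ b' = c := by
    rcases hun with hbc' | hb'c
    · refine ⟨hbc', ?_⟩
      by_contra hb'c
      have hcb' : c ≠ b' := fun h => hb'c h.symm
      have hchain : Mset (Pa G C B) b b' ∩ Mset (Pa G C B) c c' ⊆
          Mset (Pa G C B) c b' := by
        rintro Z ⟨h1, h2⟩
        exact ⟨h1.1, fun hcZ => h1.2 (hbc' ▸ h2.2 hcZ)⟩
      rcases hpol.2.2.2 _ (Mset_max hα hβinf hG hB hC hPne hcB hb'B hcb') hchain with h | h
      · obtain ⟨h1, -⟩ := Mset_inj hα hβinf hG hB hC hPne hcB hb'B hbB hb'B hcb' hne h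
        exact hne' (h1.trans hbc')
      · obtain ⟨-, h2⟩ := Mset_inj hα hβinf hG hB hC hPne hcB hb'B hcB hc'B hcb' hne' h
        exact hne (hbc'.trans h2.symm)
    · refine ⟨?_, hb'c⟩
      by_contra hbc'
      have hbc'' : b ≠ c' := hbc'
      have hchain : Mset (Pa G C B) b b' ∩ Mset (Pa G C B) c c' ⊆
          Mset (Pa G C B) b c' := by
        rintro Z ⟨h1, h2⟩
        exact ⟨h1.1, fun hbZ => h2.2 (hb'c ▸ h1.2 hbZ)⟩
      rcases hpol.2.2.2 _ (Mset_max hα hβinf hG hB hC hPne hbB hc'B hbc'') hchain with h | h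
      · obtain ⟨-, h2⟩ := Mset_inj hα hβinf hG hB hC hPne hbB hc'B hbB hb'B hbc'' hne h
        exact hne' (hb'c.symm.trans h2.symm)
      · obtain ⟨h1, -⟩ := Mset_inj hα hβinf hG hB hC hPne hbB hc'B hcB hc'B hbc'' hne' h
        exact hne (h1.trans hb'c.symm)
  obtain ⟨h1, h2⟩ := key
  exact ⟨b, hbB, b', hb'B, hne, rfl, by rw [← h1, ← h2]⟩

lemma not_mem_Mset_iff {P : Set (Submodule K V)} {X : Submodule K V} {b b' : V}
    (hX : X ∈ P) : X ∉ Mset P b b' ↔ (b ∈ X ∧ b' ∉ X) := by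
  classical
  constructor
  · intro h
    by_contra hcon
    apply h
    refine ⟨hX, fun hbX => ?_⟩
    by_contra hb'X
    exact hcon ⟨hbX, hb'X⟩
  · rintro ⟨hbX, hb'X⟩ hM
    exact hb'X (hM.2 hbX)

lemma phi_iff (hα : Cardinal.aleph0 ≤ Module.rank K V) (hβinf : Cardinal.aleph0 ≤ β)
    (hG : G = Gsub K V β ∨ G = Gsup K V β) (hB : IsBasisSet K V B)
    (hC : IsConnComponent K V G C)
    {s t : Set V} (hs : s ⊆ B) (ht : t ⊆ B)
    (hX : span K s ∈ Pa G C B) (hY : span K t ∈ Pa G C B) :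
    PhiProp G (Pa G C B) (span K s) (span K t) ↔
      ((∃ u, s \ t = {u}) ∧ (∃ w, t \ s = {w})) := by
  classical
  have hPne : (Pa G C B).Nonempty := ⟨_, hX⟩
  have memX : ∀ v ∈ B, (v ∈ span K s ↔ v ∈ s) := fun v hv => mem_iff_supp hB hs hv
  have memY : ∀ v ∈ B, (v ∈ span K t ↔ v ∈ t) := fun v hv => mem_iff_supp hB ht hv
  constructor
  · rintro ⟨⟨M, M'⟩, ⟨hpol, hXM, hYM'⟩, huniq⟩
    obtain ⟨b, hbB, b', hb'B, hne, rfl, rfl⟩ := polar_eq hα hβinf hG hB hC hPne hpol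
    obtain ⟨hbX, hb'X⟩ := (not_mem_Mset_iff hX).1 hXM
    obtain ⟨hb'Y, hbY⟩ := (not_mem_Mset_iff hY).1 hYM'
    have hbst : b ∈ s \ t := ⟨(memX b hbB).1 hbX, fun h => hbY (subset_span h)⟩
    have hb'ts : b' ∈ t \ s := ⟨(memY b' hb'B).1 hb'Y, fun h => hb'X (subset_span h)⟩
    have huw : ∀ u ∈ s \ t, ∀ w ∈ t \ s, u = b ∧ w = b' := by
      intro u hu w hw
      have huB : u ∈ B := hs hu.1
      have hwB : w ∈ B := ht hw.1
      have hune : u ≠ w := fun h => hw.2 (h ▸ hu.1)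
      have hXnM : span K s ∉ Mset (Pa G C B) u w :=
        (not_mem_Mset_iff hX).2 ⟨subset_span hu.1, fun h => hw.2 ((memX w hwB).1 h)⟩
      have hYnM' : span K t ∉ Mset (Pa G C B) w u :=
        (not_mem_Mset_iff hY).2 ⟨subset_span hw.1, fun h => hu.2 ((memY u huB).1 h)⟩
      have := huniq (Mset (Pa G C B) u w, Mset (Pa G C B) w u)
        ⟨polar_of hα hβinf hG hB hC hPne huB hwB hune, hXnM, hYnM'⟩
      have h1 : Mset (Pa G C B) u w = Mset (Pa G C B) b b' :=
        congrArg Prod.fst this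
      obtain ⟨he1, he2⟩ := Mset_inj hα hβinf hG hB hC hPne huB hwB hbB hb'B hune hne h1
      exact ⟨he1, he2⟩
    refine ⟨⟨b, ?_⟩, ⟨b', ?_⟩⟩
    · ext x
      exact ⟨fun hx => (huw x hx b' hb'ts).1, fun hx => (Set.mem_singleton_iff.1 hx) ▸ hbst⟩
    · ext x
      exact ⟨fun hx => (huw b hbst x hx).2, fun hx => (Set.mem_singleton_iff.1 hx) ▸ hb'ts⟩
  · rintro ⟨⟨u, hu⟩, ⟨w, hw⟩⟩
    have hust : u ∈ s \ t := hu ▸ rfl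
    have hwts : w ∈ t \ s := hw ▸ rfl
    have huB : u ∈ B := hs hust.1
    have hwB : w ∈ B := ht hwts.1
    have hune : u ≠ w := fun h => hwts.2 (h ▸ hust.1)
    refine ⟨(Mset (Pa G C B) u w, Mset (Pa G C B) w u),
      ⟨polar_of hα hβinf hG hB hC hPne huB hwB hune,
        (not_mem_Mset_iff hX).2 ⟨subset_span hust.1, fun h => hwts.2 ((memX w hwB).1 h)⟩,
        (not_mem_Mset_iff hY).2 ⟨subset_span hwts.1, fun h => hust.2 ((memY u huB).1 h)⟩⟩, ?_⟩
    rintro ⟨N, N'⟩ ⟨hpol, hXN, hYN'⟩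
    obtain ⟨c, hcB, c', hc'B, hnecc, rfl, rfl⟩ := polar_eq hα hβinf hG hB hC hPne hpol
    obtain ⟨hcX, hc'X⟩ := (not_mem_Mset_iff hX).1 hXN
    obtain ⟨hc'Y, hcY⟩ := (not_mem_Mset_iff hY).1 hYN'
    have hcst : c ∈ s \ t := ⟨(memX c hcB).1 hcX, fun h => hcY (subset_span h)⟩
    have hc'ts : c' ∈ t \ s := ⟨(memY c' hc'B).1 hc'Y, fun h => hc'X (subset_span h)⟩
    have hc1 : c = u := by
      have := hu ▸ hcst
      exact Set.mem_singleton_iff.1 this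
    have hc2 : c' = w := by
      have := hw ▸ hc'ts
      exact Set.mem_singleton_iff.1 this
    rw [hc1, hc2]

lemma adj_iff_phi (hα : Cardinal.aleph0 ≤ Module.rank K V) (hβinf : Cardinal.aleph0 ≤ β)
    (hG : G = Gsub K V β ∨ G = Gsup K V β) (hB : IsBasisSet K V B)
    (hC : IsConnComponent K V G C)
    {X Y : Submodule K V} (hX : X ∈ Pa G C B) (hY : Y ∈ Pa G C B) :
    AdjacentSub K V X Y ↔ PhiProp G (Pa G C B) X Y := by
  obtain ⟨s, hs, rfl⟩ := Pa_apartment hX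
  obtain ⟨t, ht, rfl⟩ := Pa_apartment hY
  rw [adjacent_iff hB hs ht, phi_iff hα hβinf hG hB hC hs ht hX hY]

/-! ### Transport of the Phi property along apartment-preserving bijections -/

def SendsAp (f : Submodule K V → Submodule K V) (G C C' : Set (Submodule K V)) : Prop :=
  ∀ B : Set V, IsBasisSet K V B → (apartmentOf K V G B ∩ C).Nonempty →
    ∃ B' : Set V, IsBasisSet K V B' ∧ (apartmentOf K V G B' ∩ C').Nonempty ∧
      f '' (apartmentOf K V G B ∩ C) = apartmentOf K V G B' ∩ C'

lemma Pa_subset_comp {C : Set (Submodule K V)} : Pa G C B ⊆ C := Set.inter_subset_right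

lemma Cl_image {f : Submodule K V → Submodule K V} {C C' : Set (Submodule K V)}
    (hbij : Set.BijOn f C C') (hfap : SendsAp f G C C')
    {B B' : Set V} (hPP : f '' (Pa G C B) = Pa G C' B')
    {𝒮 : Set (Submodule K V)} (hcl : Cl G (Pa G C B) 𝒮) :
    Cl G (Pa G C' B') (f '' 𝒮) := by
  obtain ⟨hne, B₂, hB₂, rfl⟩ := hcl
  have hsplit : Pa G C B ∩ apartmentOf K V G B₂
      = Pa G C B ∩ (apartmentOf K V G B₂ ∩ C) := by
    ext Z
    constructor
    · rintro ⟨h1, h2⟩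
      exact ⟨h1, h2, Pa_subset_comp h1⟩
    · rintro ⟨h1, h2, -⟩
      exact ⟨h1, h2⟩
  have hA₂ne : (apartmentOf K V G B₂ ∩ C).Nonempty := by
    obtain ⟨Z, hZ⟩ := hne
    exact ⟨Z, hZ.2, Pa_subset_comp hZ.1⟩
  obtain ⟨B₂', hB₂', hne₂', himg₂⟩ := hfap B₂ hB₂ hA₂ne
  have himgeq : f '' (Pa G C B ∩ apartmentOf K V G B₂)
      = Pa G C' B' ∩ apartmentOf K V G B₂' := by
    rw [hsplit, hbij.injOn.image_inter Pa_subset_comp Set.inter_subset_right, hPP, himg₂]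
    ext Z
    constructor
    · rintro ⟨h1, h2, -⟩
      exact ⟨h1, h2⟩
    · rintro ⟨h1, h2⟩
      exact ⟨h1, h2, Pa_subset_comp h1⟩
  exact ⟨hne.image f, B₂', hB₂', himgeq⟩

lemma MaxCl_image {f g : Submodule K V → Submodule K V} {C C' : Set (Submodule K V)}
    (hbij : Set.BijOn f C C') (hinv : Set.InvOn g f C C')
    (hfap : SendsAp f G C C') (hgap : SendsAp g G C' C)
    {B B' : Set V} (hPP : f '' (Pa G C B) = Pa G C' B')
    {M : Set (Submodule K V)} (hM : MaxCl G (Pa G C B) M) :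
    MaxCl G (Pa G C' B') (f '' M) := by
  have hbij' : Set.BijOn g C' C := Set.BijOn.symm hinv.symm hbij
  have hgP : g '' (Pa G C' B') = Pa G C B := by
    rw [← hPP, hinv.1.image_image' (Pa_subset_comp.trans (le_refl C))]
  have hMC : M ⊆ C := (Cl_subset hM.1).trans Pa_subset_comp
  refine ⟨Cl_image hbij hfap hPP hM.1, ?_, ?_⟩
  · rw [Set.ssubset_iff_subset_ne]
    constructor
    · rw [← hPP]
      exact Set.image_mono hM.2.1.subset
    · intro h
      have : M = Pa G C B := by
        rw [← hinv.1.image_image' hMC, h, hgP]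
      exact hM.2.1.ne this
  · intro 𝒯' h𝒯' hsub'
    have h𝒯C' : 𝒯' ⊆ C' := (Cl_subset h𝒯').trans Pa_subset_comp
    have hg𝒯 : Cl G (Pa G C B) (g '' 𝒯') := Cl_image hbij' hgap hgP h𝒯'
    have hMsub : M ⊆ g '' 𝒯' := by
      rw [← hinv.1.image_image' hMC]
      exact Set.image_mono hsub'
    rcases hM.2.2 _ hg𝒯 hMsub with h | h
    · left
      rw [← hinv.2.image_image' h𝒯C', h]
    · right
      rw [← hinv.2.image_image' h𝒯C', h, hPP]

lemma Polar_image {f g : Submodule K V → Submodule K V} {C C' : Set (Submodule K V)}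
    (hbij : Set.BijOn f C C') (hinv : Set.InvOn g f C C')
    (hfap : SendsAp f G C C') (hgap : SendsAp g G C' C)
    {B B' : Set V} (hPP : f '' (Pa G C B) = Pa G C' B')
    {M M' : Set (Submodule K V)} (hpol : Polar G (Pa G C B) M M') :
    Polar G (Pa G C' B') (f '' M) (f '' M') := by
  have hbij' : Set.BijOn g C' C := Set.BijOn.symm hinv.symm hbij
  have hgP : g '' (Pa G C' B') = Pa G C B := by
    rw [← hPP, hinv.1.image_image' (Pa_subset_comp.trans (le_refl C))]
  have hMC : M ⊆ C := (Cl_subset hpol.1.1).trans Pa_subset_comp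
  have hM'C : M' ⊆ C := (Cl_subset hpol.2.1.1).trans Pa_subset_comp
  refine ⟨MaxCl_image hbij hinv hfap hgap hPP hpol.1,
    MaxCl_image hbij hinv hfap hgap hPP hpol.2.1, ?_, ?_⟩
  · rw [← Set.image_union, hpol.2.2.1, hPP]
  · intro N'' hN'' hsubN
    have hN''C' : N'' ⊆ C' := (Cl_subset hN''.1).trans Pa_subset_comp
    have hgN : MaxCl G (Pa G C B) (g '' N'') :=
      MaxCl_image hbij' hinv.symm hgap hfap hgP hN''
    have hMM' : M ∩ M' ⊆ g '' N'' := by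
      have h1 : f '' (M ∩ M') ⊆ N'' := by
        rw [hbij.injOn.image_inter hMC hM'C]
        exact hsubN
      have := Set.image_mono (f := g) h1
      rwa [hinv.1.image_image' (Set.inter_subset_left.trans hMC)] at this
    rcases hpol.2.2.2 _ hgN hMM' with h | h
    · left
      rw [← hinv.2.image_image' hN''C', h]
    · right
      rw [← hinv.2.image_image' hN''C', h]

lemma Phi_image {f g : Submodule K V → Submodule K V} {C C' : Set (Submodule K V)}
    (hbij : Set.BijOn f C C') (hinv : Set.InvOn g f C C')
    (hfap : SendsAp f G C C') (hgap : SendsAp g G C' C)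
    {B B' : Set V} (hPP : f '' (Pa G C B) = Pa G C' B')
    {X Y : Submodule K V} (hX : X ∈ Pa G C B) (hY : Y ∈ Pa G C B)
    (hphi : PhiProp G (Pa G C B) X Y) : PhiProp G (Pa G C' B') (f X) (f Y) := by
  have hbij' : Set.BijOn g C' C := Set.BijOn.symm hinv.symm hbij
  have hgP : g '' (Pa G C' B') = Pa G C B := by
    rw [← hPP, hinv.1.image_image' (Pa_subset_comp.trans (le_refl C))]
  have hXC : X ∈ C := Pa_subset_comp hX
  have hYC : Y ∈ C := Pa_subset_comp hY
  obtain ⟨⟨M, M'⟩, ⟨hpol, hXM, hYM'⟩, huniq⟩ := hphi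
  have hMC : M ⊆ C := (Cl_subset hpol.1.1).trans Pa_subset_comp
  have hM'C : M' ⊆ C := (Cl_subset hpol.2.1.1).trans Pa_subset_comp
  refine ⟨(f '' M, f '' M'),
    ⟨Polar_image hbij hinv hfap hgap hPP hpol, ?_, ?_⟩, ?_⟩
  · rintro ⟨Z, hZM, hZeq⟩
    exact hXM ((hbij.injOn (hMC hZM) hXC hZeq) ▸ hZM)
  · rintro ⟨Z, hZM', hZeq⟩
    exact hYM' ((hbij.injOn (hM'C hZM') hYC hZeq) ▸ hZM')
  · rintro ⟨N, N'⟩ ⟨hpolN, hXN, hYN'⟩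
    have hNC' : N ⊆ C' := (Cl_subset hpolN.1.1).trans Pa_subset_comp
    have hN'C' : N' ⊆ C' := (Cl_subset hpolN.2.1.1).trans Pa_subset_comp
    have hgpol : Polar G (Pa G C B) (g '' N) (g '' N') :=
      Polar_image hbij' hinv.symm hgap hfap hgP hpolN
    have hXgN : X ∉ g '' N := by
      rintro ⟨W, hWN, hWeq⟩
      apply hXN
      have : f X = W := by
        rw [← hWeq, hinv.2 (hNC' hWN)]
      exact this ▸ hWN
    have hYgN' : Y ∉ g '' N' := by
      rintro ⟨W, hWN', hWeq⟩
      apply hYN'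
      have : f Y = W := by
        rw [← hWeq, hinv.2 (hN'C' hWN')]
      exact this ▸ hWN'
    have := huniq (g '' N, g '' N') ⟨hgpol, hXgN, hYgN'⟩
    have h1 : g '' N = M := congrArg Prod.fst this
    have h2 : g '' N' = M' := congrArg Prod.snd this
    have hN : N = f '' M := by
      rw [← h1, hinv.2.image_image' hNC']
    have hN' : N' = f '' M' := by
      rw [← h2, hinv.2.image_image' hN'C']
    rw [Prod.ext_iff]
    exact ⟨hN, hN'⟩

/-! ### Any two subspaces lie in a common apartment -/

lemma exists_common_apartment (hC : IsConnComponent K V G C)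
    {X Y : Submodule K V} (hX : X ∈ C) (hY : Y ∈ C) :
    ∃ B : Set V, IsBasisSet K V B ∧ X ∈ apartmentOf K V G B ∧ Y ∈ apartmentOf K V G B := by
  classical
  -- basis of X ⊓ Y
  obtain ⟨s₀, hs₀sub, hs₀span, hs₀li⟩ := exists_linearIndependent K ((X ⊓ Y : Submodule K V) : Set V)
  rw [Submodule.span_eq] at hs₀span
  -- extend to X
  obtain ⟨sX, hsXsub, hs₀sX, hXspan, hsXli⟩ :=
    exists_linearIndepOn_id_extension hs₀li (hs₀sub.trans (Set.inter_subset_left))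
  -- extend to Y
  obtain ⟨sY, hsYsub, hs₀sY, hYspan, hsYli⟩ :=
    exists_linearIndepOn_id_extension hs₀li (hs₀sub.trans (Set.inter_subset_right))
  have hspanX : span K sX = X :=
    le_antisymm (Submodule.span_le.2 hsXsub) (fun x hx => hXspan hx)
  have hspanY : span K sY = Y :=
    le_antisymm (Submodule.span_le.2 hsYsub) (fun x hx => hYspan hx)
  set c := sY \ s₀ with hc
  have hcli : LinearIndependent K ((↑) : c → V) := hsYli.mono Set.diff_subset
  have hdisj : Disjoint (span K sX) (span K c) := by
    rw [Submodule.disjoint_def]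
    intro v hvX hvc
    have hvY : v ∈ Y := by
      have : span K c ≤ Y := Submodule.span_le.2 (Set.diff_subset.trans hsYsub)
      exact this hvc
    have hvXY : v ∈ span K s₀ := by
      rw [hs₀span]
      exact ⟨hspanX ▸ hvX, hvY⟩
    have hdisj₀ : Disjoint (span K s₀) (span K c) := by
      have himg1 : (Subtype.val : ↥sY → V) '' (Subtype.val ⁻¹' s₀) = s₀ := by
        rw [Subtype.image_preimage_coe, Set.inter_eq_right.2 hs₀sY]
      have himg2 : (Subtype.val : ↥sY → V) '' (Subtype.val ⁻¹' c) = c := by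
        rw [Subtype.image_preimage_coe, Set.inter_eq_right.2 Set.diff_subset]
      have hd : Disjoint (Subtype.val ⁻¹' s₀ : Set ↥sY) (Subtype.val ⁻¹' c) := by
        rw [Set.disjoint_left]
        intro i hi1 hi2
        exact hi2.2 hi1
      have := LinearIndependent.disjoint_span_image (v := ((↑) : ↥sY → V)) hsYli hd
      rwa [himg1, himg2] at this
    exact (Submodule.disjoint_def.1 hdisj₀) v hvXY hvc
  have hunli : LinearIndependent K ((↑) : ↥(sX ∪ c) → V) :=
    hsXli.id_union hcli hdisj
  obtain ⟨B, -, hsub2, hBspan, hBli⟩ :=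
    exists_linearIndepOn_id_extension hunli (Set.subset_univ _)
  have hBbasis : IsBasisSet K V B :=
    ⟨hBli, eq_top_iff.2 fun x _ => hBspan (Set.mem_univ x)⟩
  have hsXB : sX ⊆ B := (Set.subset_union_left).trans hsub2
  have hsYB : sY ⊆ B := by
    intro x hx
    by_cases hxs₀ : x ∈ s₀
    · exact hsXB (hs₀sX hxs₀)
    · exact (Set.subset_union_right.trans hsub2) ⟨hx, hxs₀⟩
  exact ⟨B, hBbasis,
    ⟨(C_sub_G hC) hX, sX, hsXB, hspanX.symm⟩,
    ⟨(C_sub_G hC) hY, sY, hsYB, hspanY.symm⟩⟩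

end Stmt19Aux

variable {K : Type u} {V : Type v} [DivisionRing K] [AddCommGroup V] [Module K V]

/-- For infinite `β` and connected components `C`, `C'` of the Grassmann graph, every
bijection `f : C → C'` such that `f` and `f⁻¹` send apartments to apartments is
adjacency preserving in both directions. -/
theorem stmt19 (hα : Cardinal.aleph0 ≤ Module.rank K V)
    (β : Cardinal.{v}) (hβinf : Cardinal.aleph0 ≤ β) (hβ : β ≤ Module.rank K V)
    (G : Set (Submodule K V)) (hG : G = Gsub K V β ∨ G = Gsup K V β)
    (C C' : Set (Submodule K V))
    (hC : IsConnComponent K V G C) (hC' : IsConnComponent K V G C')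
    (f g : Submodule K V → Submodule K V)
    (hbij : Set.BijOn f C C') (hinv : Set.InvOn g f C C')
    (hf : ∀ B : Set V, IsBasisSet K V B → (apartmentOf K V G B ∩ C).Nonempty →
      ∃ B' : Set V, IsBasisSet K V B' ∧ (apartmentOf K V G B' ∩ C').Nonempty ∧
        f '' (apartmentOf K V G B ∩ C) = apartmentOf K V G B' ∩ C')
    (hg : ∀ B' : Set V, IsBasisSet K V B' → (apartmentOf K V G B' ∩ C').Nonempty →
      ∃ B : Set V, IsBasisSet K V B ∧ (apartmentOf K V G B ∩ C).Nonempty ∧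
        g '' (apartmentOf K V G B' ∩ C') = apartmentOf K V G B ∩ C) :
    ∀ X ∈ C, ∀ Y ∈ C, (AdjacentSub K V X Y ↔ AdjacentSub K V (f X) (f Y)) := by
  intro X hX Y hY
  obtain ⟨B, hB, hXA, hYA⟩ := Stmt19Aux.exists_common_apartment hC hX hY
  have hXP : X ∈ Stmt19Aux.Pa G C B := ⟨hXA, hX⟩
  have hYP : Y ∈ Stmt19Aux.Pa G C B := ⟨hYA, hY⟩
  have hPne : (apartmentOf K V G B ∩ C).Nonempty := ⟨X, hXP⟩
  obtain ⟨B', hB', hne', hPP⟩ := hf B hB hPne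
  have hPP' : f '' (Stmt19Aux.Pa G C B) = Stmt19Aux.Pa G C' B' := hPP
  have hfap : Stmt19Aux.SendsAp f G C C' := hf
  have hgap : Stmt19Aux.SendsAp g G C' C := hg
  have hfXP : f X ∈ Stmt19Aux.Pa G C' B' := hPP' ▸ Set.mem_image_of_mem f hXP
  have hfYP : f Y ∈ Stmt19Aux.Pa G C' B' := hPP' ▸ Set.mem_image_of_mem f hYP
  have hbij' : Set.BijOn g C' C := Set.BijOn.symm hinv.symm hbij
  have hgP : g '' (Stmt19Aux.Pa G C' B') = Stmt19Aux.Pa G C B := by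
    rw [← hPP', hinv.1.image_image' Stmt19Aux.Pa_subset_comp]
  constructor
  · intro hadj
    have h1 := (Stmt19Aux.adj_iff_phi hα hβinf hG hB hC hXP hYP).1 hadj
    have h2 := Stmt19Aux.Phi_image hbij hinv hfap hgap hPP' hXP hYP h1
    exact (Stmt19Aux.adj_iff_phi hα hβinf hG hB' hC' hfXP hfYP).2 h2
  · intro hadj
    have h1 := (Stmt19Aux.adj_iff_phi hα hβinf hG hB' hC' hfXP hfYP).1 hadj
    have h2 := Stmt19Aux.Phi_image hbij' hinv.symm hgap hfap hgP hfXP hfYP h1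
    rw [hinv.1 hX, hinv.1 hY] at h2
    exact (Stmt19Aux.adj_iff_phi hα hβinf hG hB hC hXP hYP).2 h2
end
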